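/- arXiv:1607.05699 — 13 statements merged into one kernel-verified Lean document; each statement's English description precedes it below -/
import Mathlib

section
/- Let β > 0 and δ > 0 and let a > δ/β. Let f : ℝ → ℝ be differentiable on [0, ∞) satisfying the logistic-type SIS mean-field dynamics f'(t) = f(t)·((1 − f(t))·a·β − δ) for all t ≥ 0, with initial condition f(0) ∈ (0, 1). Then f(t) converges to 1 − δ/(β·a) as t → ∞. -/
open Real Set Filter Topology

/-- If `f` has negative derivative at `t0 > 0`, there is a point slightly to the left
where `f` is larger. -/
private lemma sis_exists_left_gt {f : ℝ → ℝ} {d t0 : ℝ} (hf : HasDerivAt f d t0)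
    (hd : d < 0) (ht0 : 0 < t0) : ∃ t, 0 < t ∧ t < t0 ∧ f t0 < f t := by
  have h1 : ∀ᶠ t in 𝓝[≠] t0, slope f t0 t < 0 :=
    Filter.Tendsto.eventually_lt_const hd (hasDerivAt_iff_tendsto_slope.mp hf)
  have h1' : ∀ᶠ t in 𝓝[<] t0, slope f t0 t < 0 :=
    h1.filter_mono (nhdsWithin_mono _ fun x hx => ne_of_lt hx)
  have h2 : ∀ᶠ t in 𝓝[<] t0, 0 < t ∧ t < t0 :=
    Filter.eventually_of_mem (Ioo_mem_nhdsLT_of_mem ⟨ht0, le_rfl⟩) fun t ht => ⟨ht.1, ht.2⟩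
  obtain ⟨t, hslope, h0t, htt0⟩ := (h1'.and h2).exists
  refine ⟨t, h0t, htt0, ?_⟩
  rw [slope_def_field] at hslope
  rcases div_neg_iff.mp hslope with ⟨hn, hdenom⟩ | ⟨hn, hdenom⟩
  · linarith
  · linarith

/-- **SIS mean-field dynamics above the critical degree.**
If `β, δ > 0`, the common degree `a` exceeds the critical degree `δ/β`, and
`f` solves `f'(t) = f(t)·((1 − f(t))·a·β − δ)` on `[0, ∞)` with `f 0 ∈ (0, 1)`,
then `f(t) → 1 − δ/(β·a)` as `t → ∞`. -/
theorem sis_fixed_strategy_converges_to_endemic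
    (β δ a : ℝ) (hβ : 0 < β) (hδ : 0 < δ) (ha : δ / β < a)
    (f : ℝ → ℝ)
    (hode : ∀ t : ℝ, 0 ≤ t → HasDerivAt f (f t * ((1 - f t) * a * β - δ)) t)
    (h0 : f 0 ∈ Set.Ioo (0 : ℝ) 1) :
    Filter.Tendsto f Filter.atTop (nhds (1 - δ / (β * a))) := by
  have ha0 : 0 < a := lt_trans (div_pos hδ hβ) ha
  have hr : 0 < a * β := mul_pos ha0 hβ
  have hδab : δ < a * β := (div_lt_iff₀ hβ).mp ha
  have hk : 0 < a * β - δ := by linarith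
  set θ : ℝ := 1 - δ / (a * β) with hθdef
  have hθpos : 0 < θ := by
    rw [hθdef, sub_pos]; exact (div_lt_one hr).mpr hδab
  have hθ1 : θ < 1 := by
    rw [hθdef]; have : 0 < δ / (a * β) := div_pos hδ hr; linarith
  obtain ⟨hc0, hc1⟩ := h0
  -- the vector field
  set v : ℝ → ℝ → ℝ := fun _ x => x * ((1 - x) * a * β - δ) with hvdef
  -- continuity of f on [0, ∞)
  have hfc : ∀ t : ℝ, 0 ≤ t → ContinuousAt f t := fun t ht => (hode t ht).continuousAt
  -- Lipschitz constant for v on [0,1]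
  set Kr : ℝ := (a * β - δ) + 2 * (a * β) with hKrdef
  have hKr : 0 < Kr := by positivity
  have hv : ∀ t : ℝ, LipschitzOnWith Kr.toNNReal (v t) (Icc (0:ℝ) 1) := by
    intro t
    rw [lipschitzOnWith_iff_dist_le_mul]
    intro x hx y hy
    rw [Real.coe_toNNReal _ hKr.le, Real.dist_eq, Real.dist_eq]
    have hxy : v t x - v t y = (x - y) * ((a * β - δ) - a * β * (x + y)) := by
      simp only [hvdef]; ring
    rw [hxy, abs_mul]
    have hb : |(a * β - δ) - a * β * (x + y)| ≤ Kr := by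
      rw [abs_le]
      constructor
      · nlinarith [hx.1, hx.2, hy.1, hy.2]
      · nlinarith [hx.1, hx.2, hy.1, hy.2]
    calc |x - y| * |(a * β - δ) - a * β * (x + y)| ≤ |x - y| * Kr :=
          mul_le_mul_of_nonneg_left hb (abs_nonneg _)
      _ = Kr * |x - y| := mul_comm _ _
  -- upper invariance: f t < 1 for all t ≥ 0
  have hupper : ∀ t : ℝ, 0 ≤ t → f t < 1 := by
    by_contra hcon
    push_neg at hcon
    obtain ⟨t1, ht1, hft1⟩ := hcon
    set S : Set ℝ := Icc 0 t1 ∩ f ⁻¹' Ici 1 with hSdef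
    have hfcI : ContinuousOn f (Icc 0 t1) := fun s hs => (hfc s hs.1).continuousWithinAt
    have hScl : IsClosed S := hfcI.preimage_isClosed_of_isClosed isClosed_Icc isClosed_Ici
    have hSne : S.Nonempty := ⟨t1, ⟨ht1, le_rfl⟩, hft1⟩
    have hSbdd : BddBelow S := ⟨0, fun s hs => hs.1.1⟩
    set t0 : ℝ := sInf S with ht0def
    have ht0S : t0 ∈ S := hScl.csInf_mem hSne hSbdd
    have ht0pos : 0 < t0 := by
      rcases lt_or_eq_of_le ht0S.1.1 with h | h
      · exact h
      · exfalso; rw [← h] at ht0S; exact absurd ht0S.2 (by simpa using hc1)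
    have hbefore : ∀ s : ℝ, 0 ≤ s → s < t0 → f s < 1 := by
      intro s hs hst0
      by_contra hfs
      push_neg at hfs
      have : s ∈ S := ⟨⟨hs, le_trans hst0.le ht0S.1.2⟩, hfs⟩
      exact absurd (csInf_le hSbdd this) (not_le.mpr hst0)
    have hft0 : 1 ≤ f t0 := ht0S.2
    have hd : f t0 * ((1 - f t0) * a * β - δ) < 0 := by
      nlinarith [mul_nonneg (mul_nonneg (by linarith : (0:ℝ) ≤ f t0)
        (by linarith : (0:ℝ) ≤ f t0 - 1)) hr.le,
        mul_le_mul_of_nonneg_right hft0 hδ.le]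
    obtain ⟨s, hs0, hst0, hgt⟩ := sis_exists_left_gt (hode t0 ht0pos.le) hd ht0pos
    have := hbefore s hs0.le hst0
    linarith
  -- lower invariance: 0 < f t for all t ≥ 0
  have hlower : ∀ t : ℝ, 0 ≤ t → 0 < f t := by
    by_contra hcon
    push_neg at hcon
    obtain ⟨t1, ht1, hft1⟩ := hcon
    set S : Set ℝ := Icc 0 t1 ∩ f ⁻¹' Iic 0 with hSdef
    have hfcI : ContinuousOn f (Icc 0 t1) := fun s hs => (hfc s hs.1).continuousWithinAt
    have hScl : IsClosed S := hfcI.preimage_isClosed_of_isClosed isClosed_Icc isClosed_Iic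
    have hSne : S.Nonempty := ⟨t1, ⟨ht1, le_rfl⟩, hft1⟩
    have hSbdd : BddBelow S := ⟨0, fun s hs => hs.1.1⟩
    set t0 : ℝ := sInf S with ht0def
    have ht0S : t0 ∈ S := hScl.csInf_mem hSne hSbdd
    have ht0pos : 0 < t0 := by
      rcases lt_or_eq_of_le ht0S.1.1 with h | h
      · exact h
      · exfalso; rw [← h] at ht0S
        exact absurd ht0S.2 (by simpa using hc0)
    have hbefore : ∀ s : ℝ, 0 ≤ s → s < t0 → 0 < f s := by
      intro s hs hst0
      by_contra hfs
      push_neg at hfs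
      have : s ∈ S := ⟨⟨hs, le_trans hst0.le ht0S.1.2⟩, hfs⟩
      exact absurd (csInf_le hSbdd this) (not_le.mpr hst0)
    -- f t0 = 0
    have hft00 : f t0 = 0 := by
      refine le_antisymm ht0S.2 ?_
      have htd : Filter.Tendsto f (𝓝[<] t0) (𝓝 (f t0)) :=
        ((hfc t0 ht0pos.le).tendsto).mono_left nhdsWithin_le_nhds
      refine ge_of_tendsto htd ?_
      refine Filter.eventually_of_mem (Ioo_mem_nhdsLT_of_mem ⟨ht0pos, le_rfl⟩) fun s hs => ?_
      exact (hbefore s hs.1.le hs.2).le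
    -- backward uniqueness with the zero solution
    have hzero : EqOn f (fun _ => (0:ℝ)) (Icc 0 t0) := by
      refine ODE_solution_unique_of_mem_Icc_left (v := v) (s := fun _ => Icc (0:ℝ) 1)
        (K := Kr.toNNReal) (fun t _ => hv t)
        (fun s hs => (hfc s hs.1).continuousWithinAt)
        (fun s hs => (hode s hs.1.le).hasDerivWithinAt)
        (fun s hs => ?_)
        continuousOn_const
        (fun s hs => ?_)
        (fun s hs => ⟨le_refl 0, zero_le_one⟩)
        (by simpa using hft00)
      · constructor
        · rcases lt_or_eq_of_le hs.2 with h | h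
          · exact (hbefore s hs.1.le h).le
          · rw [h, hft00]
        · exact (hupper s hs.1.le).le
      · have : v s 0 = 0 := by simp [hvdef]
        rw [this]
        exact hasDerivWithinAt_const s _ 0
    have := hzero ⟨le_rfl, ht0pos.le⟩
    simp only at this
    linarith
  -- explicit solution
  set c : ℝ := f 0 with hcdef
  set D : ℝ → ℝ := fun t => c + (θ - c) * Real.exp (-((a * β - δ) * t)) with hDdef
  set g : ℝ → ℝ := fun t => θ * c / D t with hgdef
  have hexp_pos : ∀ t : ℝ, 0 < Real.exp (-((a * β - δ) * t)) := fun t => Real.exp_pos _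
  have hexp_le : ∀ t : ℝ, 0 ≤ t → Real.exp (-((a * β - δ) * t)) ≤ 1 := by
    intro t ht
    rw [Real.exp_le_one_iff]
    nlinarith
  have hDpos : ∀ t : ℝ, 0 ≤ t → 0 < D t := by
    intro t ht
    have he := hexp_pos t
    have he1 := hexp_le t ht
    simp only [hDdef]
    rcases le_or_gt c θ with h | h
    · nlinarith
    · nlinarith
  have hDderiv : ∀ t : ℝ, HasDerivAt D ((θ - c) * (Real.exp (-((a * β - δ) * t)) * (-(a * β - δ)))) t := by
    intro t
    have h1 : HasDerivAt (fun s : ℝ => -((a * β - δ) * s)) (-(a * β - δ)) t := by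
      simpa using ((hasDerivAt_id t).const_mul (a * β - δ)).fun_neg
    have h2 := h1.exp
    simpa [hDdef] using (h2.const_mul (θ - c)).const_add c
  have hθk : θ * (a * β) = a * β - δ := by
    rw [hθdef]; field_simp
  have hg' : ∀ t : ℝ, 0 ≤ t → HasDerivAt g (g t * ((1 - g t) * a * β - δ)) t := by
    intro t ht
    have hDne : D t ≠ 0 := (hDpos t ht).ne'
    have hd := (hasDerivAt_const t (θ * c)).div (hDderiv t) hDne
    have heq : (0 * D t - θ * c * ((θ - c) * (Real.exp (-((a * β - δ) * t)) * (-(a * β - δ))))) / D t ^ 2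
        = g t * ((1 - g t) * a * β - δ) := by
      have hDne' : c + (θ - c) * Real.exp (-((a * β - δ) * t)) ≠ 0 := by
        simpa [hDdef] using hDne
      simp only [hgdef, hDdef]
      set e : ℝ := Real.exp (-((a * β - δ) * t)) with hedef
      field_simp
      linear_combination (θ * c ^ 2) * hθk
    exact heq ▸ hd
  -- g stays in [0,1] for t ≥ 0
  have hgmem : ∀ t : ℝ, 0 ≤ t → g t ∈ Icc (0:ℝ) 1 := by
    intro t ht
    have hD := hDpos t ht
    have he := hexp_pos t
    have he1 := hexp_le t ht
    constructor
    · exact div_nonneg (by positivity) hD.le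
    · rw [div_le_one hD]
      simp only [hDdef]
      rcases le_or_gt c θ with h | h
      · nlinarith
      · nlinarith
  -- uniqueness: f = g on [0, ∞)
  have hg0 : g 0 = c := by
    simp only [hgdef, hDdef]
    rw [show -((a * β - δ) * 0) = 0 by ring, Real.exp_zero]
    rw [show c + (θ - c) * 1 = θ by ring]
    field_simp
  have hfg : ∀ t : ℝ, 0 ≤ t → f t = g t := by
    intro t ht
    have heq : EqOn f g (Icc 0 t) := by
      refine ODE_solution_unique_of_mem_Icc_right (v := v) (s := fun _ => Icc (0:ℝ) 1)
        (K := Kr.toNNReal) (fun t _ => hv t)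
        (fun s hs => (hfc s hs.1).continuousWithinAt)
        (fun s hs => (hode s hs.1).hasDerivWithinAt)
        (fun s hs => ⟨(hlower s hs.1).le, (hupper s hs.1).le⟩)
        (fun s hs => (hg' s hs.1).continuousAt.continuousWithinAt)
        (fun s hs => (hg' s hs.1).hasDerivWithinAt)
        (fun s hs => hgmem s hs.1)
        (by rw [hg0])
    exact heq ⟨ht, le_rfl⟩
  -- limit of g
  have hexplim : Filter.Tendsto (fun t => Real.exp (-((a * β - δ) * t))) atTop (𝓝 0) := by
    have h1 : Filter.Tendsto (fun t : ℝ => (a * β - δ) * t) atTop atTop :=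
      Filter.Tendsto.const_mul_atTop hk tendsto_id
    have h2 : Filter.Tendsto (fun t : ℝ => -((a * β - δ) * t)) atTop atBot :=
      tendsto_neg_atTop_atBot.comp h1
    exact Real.tendsto_exp_atBot.comp h2
  have hDlim : Filter.Tendsto D atTop (𝓝 c) := by
    have h1 : Filter.Tendsto (fun t : ℝ => c + (θ - c) * Real.exp (-((a * β - δ) * t)))
        atTop (𝓝 (c + (θ - c) * 0)) :=
      (tendsto_const_nhds : Filter.Tendsto (fun _ : ℝ => c) atTop (𝓝 c)).add
        (hexplim.const_mul (θ - c))
    simpa [hDdef] using h1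
  have hglim : Filter.Tendsto g atTop (𝓝 θ) := by
    have := (tendsto_const_nhds (x := θ * c)).div hDlim hc0.ne'
    have hval : θ * c / c = θ := by field_simp
    rw [hval] at this
    exact this
  have hgoal : (1 : ℝ) - δ / (β * a) = θ := by rw [hθdef, mul_comm]
  rw [hgoal]
  refine hglim.congr' ?_
  filter_upwards [eventually_ge_atTop (0:ℝ)] with t ht
  exact (hfg t ht).symm
end

section
/- Let β > 0, δ > 0 and a > δ/β, and let γ > 0 be the unit immunization cost. Define the stationary infection level under immunization parameter η ∈ [0, 1] as θ(η) = max(η − δ/(β·a), 0), and the total cost D(η) = θ(η) + γ·(1 − η). Then: (i) if γ ≤ 1, the point η = δ/(β·a) minimizes D over [0, 1] (this minimizer is unique when γ < 1); (ii) if γ > 1, the point η = 1 is the unique minimizer of D over [0, 1]. -/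
/-- **Optimal immunization under a fixed link-formation strategy.**
With stationary infection level `θ(η) = max (η − δ/(β·a)) 0` and total cost
`D(η) = θ(η) + γ·(1 − η)`:
(i) if `γ ≤ 1` then `η = δ/(β·a)` minimizes `D` over `[0,1]` (uniquely when `γ < 1`);
(ii) if `γ > 1` then `η = 1` is the unique minimizer of `D` over `[0,1]`. -/
theorem optimal_protection_fixed_strategy
    (β δ a γ : ℝ) (hβ : 0 < β) (hδ : 0 < δ) (ha : δ / β < a) (hγ : 0 < γ) :
    (γ ≤ 1 →
      (∀ η ∈ Set.Icc (0 : ℝ) 1,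
        (max (δ / (β * a) - δ / (β * a)) 0 + γ * (1 - δ / (β * a))) ≤
          (max (η - δ / (β * a)) 0 + γ * (1 - η))) ∧
      (γ < 1 → ∀ η ∈ Set.Icc (0 : ℝ) 1, η ≠ δ / (β * a) →
        (max (δ / (β * a) - δ / (β * a)) 0 + γ * (1 - δ / (β * a))) <
          (max (η - δ / (β * a)) 0 + γ * (1 - η)))) ∧
    (1 < γ → ∀ η ∈ Set.Icc (0 : ℝ) 1, η ≠ 1 →
      (max (1 - δ / (β * a)) 0 + γ * (1 - 1)) <
        (max (η - δ / (β * a)) 0 + γ * (1 - η))) := by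
  have ha0 : 0 < a := lt_trans (div_pos hδ hβ) ha
  set c : ℝ := δ / (β * a) with hc
  have hc0 : 0 < c := div_pos hδ (mul_pos hβ ha0)
  have hc1 : c < 1 := by
    rw [hc, div_lt_one (mul_pos hβ ha0)]
    calc δ = (δ / β) * β := by field_simp
    _ < a * β := by exact mul_lt_mul_of_pos_right ha hβ
    _ = β * a := mul_comm a β
  refine ⟨fun hγ1 => ⟨?_, ?_⟩, ?_⟩
  · intro η ⟨h0, h1⟩
    rcases le_or_gt η c with h | h
    · rw [max_eq_right (by linarith), max_eq_right (by linarith)]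
      nlinarith
    · rw [max_eq_right (by linarith), max_eq_left (by linarith)]
      nlinarith
  · intro hγ1' η ⟨h0, h1⟩ hne
    rcases le_or_gt η c with h | h
    · have h' : η < c := lt_of_le_of_ne h hne
      rw [max_eq_right (by linarith), max_eq_right (by linarith)]
      nlinarith
    · rw [max_eq_right (by linarith), max_eq_left (by linarith)]
      nlinarith
  · intro hγ1 η ⟨h0, h1⟩ hne
    have h1' : η < 1 := lt_of_le_of_ne h1 hne
    rw [max_eq_left (by linarith)]
    rcases le_or_gt η c with h | h
    · rw [max_eq_right (by linarith)]
      nlinarith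
    · rw [max_eq_left (by linarith)]
      nlinarith
end

section
/- Let β > 0 and δ > 0, and let u : ℝ → ℝ be twice continuously differentiable with u(0) = 0, u''(x) < 0 for all x > 0, and suppose there exists W > δ/β with u'(W) = 0 (so u'(x) > 0 for x ∈ [0, W) and u'(x) < 0 for x > W). Define the system efficiency E(a) = u(a) for 0 < a ≤ δ/β and E(a) = (δ/(β·a))·u(a) for a ≥ δ/β. Then a = δ/β is the unique maximizer of E over (0, ∞), and the optimal efficiency equals u(δ/β). -/
/-- **Social optimum under fixed strategies.**
If `u` is `C²` with `u 0 = 0`, `u'' < 0` on `(0, ∞)`, and there exists `W > δ/β`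
with `u' W = 0`, then the system efficiency
`E(a) = u(a)` for `0 < a ≤ δ/β` and `E(a) = (δ/(β·a))·u(a)` for `a ≥ δ/β`
is uniquely maximized over `(0, ∞)` at the critical degree `a = δ/β`,
with optimal value `u(δ/β)`. -/
theorem social_optimum_at_critical_degree
    (β δ : ℝ) (hβ : 0 < β) (hδ : 0 < δ)
    (u : ℝ → ℝ) (hu : ContDiff ℝ 2 u) (hu0 : u 0 = 0)
    (hu'' : ∀ x : ℝ, 0 < x → deriv (deriv u) x < 0)
    (W : ℝ) (hW : δ / β < W) (huW : deriv u W = 0)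
    (E : ℝ → ℝ)
    (hE1 : ∀ a : ℝ, 0 < a → a ≤ δ / β → E a = u a)
    (hE2 : ∀ a : ℝ, δ / β ≤ a → E a = (δ / (β * a)) * u a) :
    (∀ a : ℝ, 0 < a → a ≠ δ / β → E a < E (δ / β)) ∧ E (δ / β) = u (δ / β) := by
  set c := δ / β with hcdef
  have hc0 : 0 < c := div_pos hδ hβ
  have hEc : E c = u c := hE1 c hc0 le_rfl
  -- deriv u is continuous
  have hderivCont : Continuous (deriv u) := hu.continuous_deriv one_le_two
  -- deriv u strictly antitone on [0, ∞)
  have hanti : StrictAntiOn (deriv u) (Set.Ici 0) := by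
    apply strictAntiOn_of_deriv_neg (convex_Ici 0) hderivCont.continuousOn
    intro x hx
    rw [interior_Ici] at hx
    exact hu'' x hx
  -- u strictly monotone on [0, W]
  have hmono : StrictMonoOn u (Set.Icc 0 W) := by
    apply strictMonoOn_of_deriv_pos (convex_Icc 0 W) hu.continuous.continuousOn
    intro x hx
    rw [interior_Icc] at hx
    have : deriv u W < deriv u x :=
      hanti (le_of_lt hx.1) (le_trans (le_of_lt hx.1) (le_of_lt hx.2)) hx.2
    linarith [huW ▸ this]
  -- u strictly concave on [0, ∞)
  have hconc : StrictConcaveOn ℝ (Set.Ici 0) u := by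
    apply strictConcaveOn_of_deriv2_neg (convex_Ici 0) hu.continuous.continuousOn
    intro x hx
    rw [interior_Ici] at hx
    exact hu'' x hx
  refine ⟨?_, hEc⟩
  intro a ha hne
  rcases lt_or_gt_of_ne hne with h | h
  · -- 0 < a < c : E a = u a < u c
    rw [hE1 a ha (le_of_lt h), hEc]
    exact hmono ⟨ha.le, (h.trans hW).le⟩ ⟨hc0.le, hW.le⟩ h
  · -- a > c : E a = (c/a) * u a < u c by strict concavity
    have ha0 : (0:ℝ) < a := ha
    have hca : c / a < 1 := (div_lt_one ha0).mpr h
    have hca0 : 0 < c / a := div_pos hc0 ha0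
    have key := hconc.2 (Set.self_mem_Ici) (Set.mem_Ici.mpr (le_of_lt ha0))
      (ne_of_lt ha0) (show (0:ℝ) < 1 - c / a by linarith) hca0 (by ring)
    have hsa : (1 - c / a) • (0:ℝ) + (c / a) • a = c := by
      field_simp
      rw [smul_eq_mul, smul_eq_mul, mul_zero, zero_add, div_mul_cancel₀ c ha0.ne']
    rw [hsa] at key
    have : (c / a) * u a < u c := by
      simpa [hu0, smul_eq_mul] using key
    rw [hE2 a (le_of_lt h), hEc]
    calc δ / (β * a) * u a = (c / a) * u a := by rw [hcdef, div_div]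
    _ < u c := this
end

section
/- Let β > 0, δ > 0, ρ > 0, let u : ℝ → ℝ be twice continuously differentiable with u(0) = 0, u'(x) > 0 for x ∈ [0, W), u'(W) = 0, and u''(x) < 0 for x ∈ [0, W], and fix θ ∈ (0, 1]. Then the function a ↦ u(a)/(ρ + δ + β·θ·a) on [0, W] attains its maximum at a unique point a* ∈ (0, W), and a* is the unique solution in (0, W) of the first-order condition u'(a)·(ρ + δ + β·θ·a) = u(a)·β·θ. -/
/-- **Unique best response to a conjectured infection level.**
For `θ ∈ (0, 1]`, the long-term utility `a ↦ u(a)/(ρ + δ + β·θ·a)` on `[0, W]`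
attains its maximum at a unique point `a* ∈ (0, W)`, and `a*` is the unique
solution in `(0, W)` of the first-order condition
`u'(a)·(ρ + δ + β·θ·a) = u(a)·β·θ`. -/
theorem unique_best_response
    (β δ ρ W : ℝ) (hβ : 0 < β) (hδ : 0 < δ) (hρ : 0 < ρ) (hW : 0 < W)
    (u : ℝ → ℝ) (hu : ContDiff ℝ 2 u) (hu0 : u 0 = 0)
    (hu' : ∀ x : ℝ, 0 ≤ x → x < W → 0 < deriv u x) (huW : deriv u W = 0)
    (hu'' : ∀ x : ℝ, 0 ≤ x → x ≤ W → deriv (deriv u) x < 0)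
    (θ : ℝ) (hθ : θ ∈ Set.Ioc (0 : ℝ) 1) :
    ∃ a : ℝ, a ∈ Set.Ioo 0 W ∧
      IsMaxOn (fun x => u x / (ρ + δ + β * θ * x)) (Set.Icc 0 W) a ∧
      (∀ a' ∈ Set.Icc (0 : ℝ) W,
        IsMaxOn (fun x => u x / (ρ + δ + β * θ * x)) (Set.Icc 0 W) a' → a' = a) ∧
      (∀ a' ∈ Set.Ioo (0 : ℝ) W,
        (deriv u a' * (ρ + δ + β * θ * a') = u a' * (β * θ) ↔ a' = a)) := by
  set c := β * θ with hc
  have hcpos : 0 < c := mul_pos hβ hθ.1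
  set D : ℝ → ℝ := fun x => ρ + δ + c * x with hD
  have hDpos : ∀ x : ℝ, 0 ≤ x → 0 < D x := by
    intro x hx
    have : 0 ≤ c * x := mul_nonneg hcpos.le hx
    simp only [hD]; linarith
  have hDderiv : ∀ x : ℝ, HasDerivAt D c x := by
    intro x
    have h1 : HasDerivAt (fun y : ℝ => c * y) (c * 1) x := (hasDerivAt_id x).const_mul c
    simpa only [mul_one] using h1.const_add (ρ + δ)
  have hu1 : Differentiable ℝ u := hu.differentiable (by norm_num)
  have hu2 : ContDiff ℝ 1 (deriv u) := by
    have h : ContDiff ℝ ((1 : ℕ∞) + 1) u := by exact_mod_cast hu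
    exact (contDiff_succ_iff_deriv.mp h).2.2
  have hu2d : Differentiable ℝ (deriv u) := hu2.differentiable one_ne_zero
  -- the function f and the FOC function g
  set f : ℝ → ℝ := fun x => u x / D x with hf
  set g : ℝ → ℝ := fun x => deriv u x * D x - u x * c with hg
  have hfderiv : ∀ x : ℝ, 0 ≤ x → HasDerivAt f (g x / (D x) ^ 2) x := by
    intro x hx
    have h := ((hu1 x).hasDerivAt).div (hDderiv x) (hDpos x hx).ne'
    exact h
  have hgderiv : ∀ x : ℝ, HasDerivAt g (deriv (deriv u) x * D x) x := by
    intro x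
    have h := (((hu2d x).hasDerivAt).mul (hDderiv x)).sub (((hu1 x).hasDerivAt).mul_const c)
    exact h.congr_deriv (by ring)
  have hDcont : Continuous D := by
    simp only [hD]; continuity
  have hgcont : Continuous g := by
    exact ((hu2.continuous.mul hDcont).sub (hu1.continuous.mul continuous_const))
  -- g is strictly decreasing on [0, W]
  have hganti : StrictAntiOn g (Set.Icc 0 W) := by
    apply strictAntiOn_of_deriv_neg (convex_Icc 0 W) hgcont.continuousOn
    intro x hx
    rw [interior_Icc] at hx
    rw [(hgderiv x).deriv]
    exact mul_neg_of_neg_of_pos (hu'' x hx.1.le hx.2.le) (hDpos x hx.1.le)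
  -- u is strictly increasing on [0, W], hence u W > 0
  have humono : StrictMonoOn u (Set.Icc 0 W) := by
    apply strictMonoOn_of_deriv_pos (convex_Icc 0 W) hu1.continuous.continuousOn
    intro x hx
    rw [interior_Icc] at hx
    exact hu' x hx.1.le hx.2
  have huWpos : 0 < u W := by
    have := humono (Set.left_mem_Icc.mpr hW.le) (Set.right_mem_Icc.mpr hW.le) hW
    rwa [hu0] at this
  have hg0 : 0 < g 0 := by
    have h0 := hu' 0 le_rfl hW
    have hD0 := hDpos 0 le_rfl
    simp only [hg, hu0, zero_mul, sub_zero]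
    exact mul_pos h0 hD0
  have hgW : g W < 0 := by
    simp only [hg, huW, zero_mul, zero_sub, neg_neg, neg_lt_zero]
    exact mul_pos huWpos hcpos
  -- find the root a of g in (0, W)
  obtain ⟨a, haI, hga⟩ := intermediate_value_Ioo' hW.le hgcont.continuousOn
    (Set.mem_Ioo.mpr ⟨hgW, hg0⟩)
  have ha0 : 0 < a := haI.1
  have haW : a < W := haI.2
  -- f is strictly increasing on [0, a] and strictly decreasing on [a, W]
  have hfmono : StrictMonoOn f (Set.Icc 0 a) := by
    apply strictMonoOn_of_deriv_pos (convex_Icc 0 a)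
    · apply ContinuousOn.div hu1.continuous.continuousOn hDcont.continuousOn
      intro x hx
      exact (hDpos x hx.1).ne'
    · intro x hx
      rw [interior_Icc] at hx
      rw [(hfderiv x hx.1.le).deriv]
      apply div_pos _ (pow_pos (hDpos x hx.1.le) 2)
      have hxW : x < W := hx.2.trans haW
      have := hganti ⟨hx.1.le, hxW.le⟩ ⟨ha0.le, haW.le⟩ hx.2
      linarith [hga ▸ this]
  have hfanti : StrictAntiOn f (Set.Icc a W) := by
    apply strictAntiOn_of_deriv_neg (convex_Icc a W)
    · apply ContinuousOn.div hu1.continuous.continuousOn hDcont.continuousOn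
      intro x hx
      exact (hDpos x (ha0.le.trans hx.1)).ne'
    · intro x hx
      rw [interior_Icc] at hx
      have hx0 : 0 ≤ x := ha0.le.trans hx.1.le
      rw [(hfderiv x hx0).deriv]
      apply div_neg_of_neg_of_pos _ (pow_pos (hDpos x hx0) 2)
      have := hganti ⟨ha0.le, haW.le⟩ ⟨hx0, hx.2.le⟩ hx.1
      linarith [hga ▸ this]
  have haIcc : a ∈ Set.Icc (0 : ℝ) W := ⟨ha0.le, haW.le⟩
  -- strict comparison with the value at a
  have hlt : ∀ x ∈ Set.Icc (0 : ℝ) W, x ≠ a → f x < f a := by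
    intro x hx hxa
    rcases lt_or_gt_of_ne hxa with h | h
    · exact hfmono ⟨hx.1, h.le⟩ ⟨hx.1.trans h.le, le_rfl⟩ h
    · exact hfanti ⟨le_rfl, haW.le⟩ ⟨h.le, hx.2⟩ h
  have hmax : IsMaxOn f (Set.Icc 0 W) a := by
    intro x hx
    rcases eq_or_ne x a with h | h
    · simp [h]
    · exact (hlt x hx h).le
  refine ⟨a, ⟨ha0, haW⟩, hmax, ?_, ?_⟩
  · intro a' ha' hmax'
    by_contra h
    have h1 := hlt a' ha' h
    have h2 := hmax' haIcc
    simp only [Set.mem_setOf_eq] at h2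
    exact absurd h2 (not_le.mpr h1)
  · intro a' ha'
    constructor
    · intro hfoc
      have hga' : g a' = 0 := by simp only [hg, hD]; linarith
      exact hganti.injOn ⟨ha'.1.le, ha'.2.le⟩ haIcc (by rw [hga', hga])
    · intro h
      subst h
      simp only [hg, hD] at hga
      linarith
end

section
/- Let β > 0, δ > 0, ρ > 0, and let u : ℝ → ℝ be twice continuously differentiable with u(0) = 0, u'(x) > 0 for x ∈ [0, W), u'(W) = 0, and u''(x) < 0 for x ∈ [0, W], where W > δ/β. Then there exists a unique a ∈ (δ/β, W) satisfying the conjectural-equilibrium equation u(a)/u'(a) − a = (ρ + δ)/(β − δ/a). In particular, the equilibrium number of links a^CE strictly exceeds the critical degree a_c = δ/β, so the stationary infection level 1 − δ/(β·a^CE) is strictly positive. -/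
/-- **Existence and uniqueness of the conjectural equilibrium.**
There is a unique `a ∈ (δ/β, W)` satisfying the conjectural-equilibrium
equation `u(a)/u'(a) − a = (ρ + δ)/(β − δ/a)`.  In particular the equilibrium
degree exceeds the critical degree `δ/β`, so the stationary infection level
`1 − δ/(β·a)` is strictly positive. -/
theorem conjectural_equilibrium_exists_unique
    (β δ ρ W : ℝ) (hβ : 0 < β) (hδ : 0 < δ) (hρ : 0 < ρ) (hW : δ / β < W)
    (u : ℝ → ℝ) (hu : ContDiff ℝ 2 u) (hu0 : u 0 = 0)
    (hu' : ∀ x : ℝ, 0 ≤ x → x < W → 0 < deriv u x) (huW : deriv u W = 0)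
    (hu'' : ∀ x : ℝ, 0 ≤ x → x ≤ W → deriv (deriv u) x < 0) :
    (∃! a : ℝ, a ∈ Set.Ioo (δ / β) W ∧
      u a / deriv u a - a = (ρ + δ) / (β - δ / a)) ∧
    (∀ a ∈ Set.Ioo (δ / β) W,
      u a / deriv u a - a = (ρ + δ) / (β - δ / a) → 0 < 1 - δ / (β * a)) := by
  have hc0 : 0 < δ / β := div_pos hδ hβ
  have hWpos : 0 < W := lt_trans hc0 hW
  have hDu : Differentiable ℝ u := hu.differentiable (by norm_num)
  have hDu1 : ContDiff ℝ 1 (deriv u) :=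
    ((contDiff_succ_iff_deriv (n := 1)).mp (by exact_mod_cast hu)).2.2
  have hDdu : Differentiable ℝ (deriv u) := hDu1.differentiable (by norm_num)
  have hcu' : Continuous (deriv u) := hDdu.continuous
  -- deriv u is strictly decreasing on [0, W]
  have hanti : StrictAntiOn (deriv u) (Set.Icc 0 W) :=
    strictAntiOn_of_deriv_neg (convex_Icc 0 W) hcu'.continuousOn
      (fun x hx => by
        rw [interior_Icc] at hx
        exact hu'' x hx.1.le hx.2.le)
  -- key concavity fact : a * u'(a) < u(a) on (0, W]
  have key : ∀ a : ℝ, 0 < a → a ≤ W → a * deriv u a < u a := by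
    intro a ha haW
    obtain ⟨x, hx, hslope⟩ := exists_deriv_eq_slope u ha hDu.continuous.continuousOn
      hDu.differentiableOn
    have hxlt : deriv u a < deriv u x :=
      hanti ⟨hx.1.le, hx.2.le.trans haW⟩ ⟨ha.le, haW⟩ hx.2
    have hua : u a = a * deriv u x := by
      rw [hslope, hu0, sub_zero, sub_zero]; field_simp
    nlinarith
  have huWpos : 0 < u W := by
    have := key W hWpos le_rfl
    rw [huW] at this; linarith
  -- basic positivity facts on the interval
  have hfacts : ∀ a ∈ Set.Ioo (δ / β) W,
      0 < a ∧ 0 < deriv u a ∧ 0 < β - δ / a ∧ 0 < β * a - δ := by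
    intro a ha
    have ha0 : 0 < a := lt_trans hc0 ha.1
    have hd : 0 < deriv u a := hu' a ha0.le ha.2
    have hβa : δ < β * a := by
      have := (div_lt_iff₀ hβ).mp ha.1
      linarith [this]
    have hD : 0 < β - δ / a := by
      have : δ / a < β := (div_lt_iff₀ ha0).mpr (by linarith)
      linarith
    exact ⟨ha0, hd, hD, by linarith⟩
  -- the function F whose zeros are the equilibria
  set F : ℝ → ℝ := fun x => u x / deriv u x - x - (ρ + δ) / (β - δ / x) with hF
  -- derivative of F on the interval
  have hFat : ∀ a ∈ Set.Ioo (δ / β) W, HasDerivAt F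
      (-(u a * deriv (deriv u) a) / (deriv u a) ^ 2
        + (ρ + δ) * δ / (a ^ 2 * (β - δ / a) ^ 2)) a := by
    intro a ha
    obtain ⟨ha0, hd, hD, hβa⟩ := hfacts a ha
    have h1 : HasDerivAt u (deriv u a) a := hDu.differentiableAt.hasDerivAt
    have h2 : HasDerivAt (deriv u) (deriv (deriv u) a) a := hDdu.differentiableAt.hasDerivAt
    have h3 := h1.div h2 hd.ne'
    have h4 : HasDerivAt (fun x : ℝ => δ / x) ((0 * a - δ * 1) / a ^ 2) a :=
      (hasDerivAt_const a δ).div (hasDerivAt_id a) ha0.ne'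
    have h5 := h4.const_sub β
    have h6 := (hasDerivAt_const a (ρ + δ)).div h5 hD.ne'
    have h7 := (h3.sub (hasDerivAt_id' a)).sub h6
    convert h7 using 1
    · rfl
    · rfl
    · rfl
    have hDa : β - δ / a = (β * a - δ) / a := by field_simp
    rw [hDa]
    field_simp
    ring
  -- F is strictly monotone on the interval
  have hmono : StrictMonoOn F (Set.Ioo (δ / β) W) := by
    apply strictMonoOn_of_deriv_pos (convex_Ioo _ _)
    · intro a ha
      exact ((hFat a ha).continuousAt).continuousWithinAt
    · rw [interior_Ioo]
      intro a ha
      obtain ⟨ha0, hd, hD, hβa⟩ := hfacts a ha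
      rw [(hFat a ha).deriv]
      have hupos : 0 < u a := lt_trans (by positivity) (key a ha0 ha.2.le)
      have h2 := hu'' a ha0.le ha.2.le
      have t1 : 0 < -(u a * deriv (deriv u) a) / (deriv u a) ^ 2 :=
        div_pos (by nlinarith) (by positivity)
      have t2 : 0 < (ρ + δ) * δ / (a ^ 2 * (β - δ / a) ^ 2) := by positivity
      linarith
  -- equivalence between the equation and F = 0
  have hFzero : ∀ a ∈ Set.Ioo (δ / β) W,
      (u a / deriv u a - a = (ρ + δ) / (β - δ / a)) ↔ F a = 0 := by
    intro a ha
    constructor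
    · intro h; simp only [hF]; rw [h]; ring
    · intro h; simp only [hF] at h; linarith
  -- existence via intermediate value theorem on the cleared-denominator function
  set G : ℝ → ℝ := fun x =>
    u x * (β * x - δ) - deriv u x * (x * (β * x - δ) + (ρ + δ) * x) with hG
  have hGc : Continuous G := by
    apply Continuous.sub
    · exact hDu.continuous.mul ((continuous_const.mul continuous_id).sub continuous_const)
    · exact hcu'.mul (((continuous_id.mul ((continuous_const.mul continuous_id).sub
        continuous_const))).add (continuous_const.mul continuous_id))
  have hGleft : G (δ / β) < 0 := by
    have h0 : β * (δ / β) - δ = 0 := by field_simp; ring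
    have hd : 0 < deriv u (δ / β) := hu' _ hc0.le hW
    simp only [hG, h0, mul_zero, zero_mul, zero_sub, zero_add]
    have : 0 < deriv u (δ / β) * ((ρ + δ) * (δ / β)) := by positivity
    nlinarith [this]
  have hGright : 0 < G W := by
    have hβW : δ < β * W := by
      have := (div_lt_iff₀ hβ).mp hW; linarith
    simp only [hG, huW, zero_mul, sub_zero]
    nlinarith
  obtain ⟨a, haIoo, hGa⟩ : ∃ a ∈ Set.Ioo (δ / β) W, G a = 0 := by
    have h := intermediate_value_Ioo hW.le hGc.continuousOn
    have h0 : (0 : ℝ) ∈ Set.Ioo (G (δ / β)) (G W) := ⟨hGleft, hGright⟩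
    obtain ⟨a, ha, hfa⟩ := h h0
    exact ⟨a, ha, hfa⟩
  obtain ⟨ha0, hd, hD, hβa⟩ := hfacts a haIoo
  have heq : u a / deriv u a - a = (ρ + δ) / (β - δ / a) := by
    simp only [hG] at hGa
    have hne : a * β - δ ≠ 0 := (by linarith : (0:ℝ) < a * β - δ).ne'
    field_simp
    nlinarith [hGa]
  constructor
  · refine ⟨a, ⟨haIoo, heq⟩, ?_⟩
    intro b ⟨hbIoo, hbeq⟩
    apply hmono.injOn hbIoo haIoo
    rw [(hFzero b hbIoo).mp hbeq, (hFzero a haIoo).mp heq]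
  · intro b hb _
    obtain ⟨hb0, _, hbD, hβb'⟩ := hfacts b hb
    have hβb : δ < β * b := by
      have := (div_lt_iff₀ hβ).mp hb.1; linarith
    have : δ / (β * b) < 1 := (div_lt_one (by positivity)).mpr hβb
    linarith
end

section
/- Let β > 0, δ > 0, and let u : ℝ → ℝ be twice continuously differentiable with u(0) = 0, u'(x) > 0 for x ∈ [0, W), u'(W) = 0, and u''(x) < 0 for x ∈ [0, W], where W > δ/β. Suppose 0 < ρ₁ < ρ₂, and let a₁, a₂ ∈ (δ/β, W) be the unique solutions of u(a)/u'(a) − a = (ρₖ + δ)/(β − δ/a) for k = 1, 2 respectively. Then a₁ < a₂; that is, the conjectural-equilibrium degree a^CE is strictly increasing in the discount rate ρ. -/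
/-- **The conjectural-equilibrium degree is strictly increasing in the
discount rate `ρ`.**  If `0 < ρ₁ < ρ₂` and `a₁, a₂ ∈ (δ/β, W)` solve
`u(a)/u'(a) − a = (ρₖ + δ)/(β − δ/a)` for `k = 1, 2`, then `a₁ < a₂`. -/
theorem equilibrium_degree_increasing_in_rho
    (β δ ρ₁ ρ₂ W : ℝ) (hβ : 0 < β) (hδ : 0 < δ) (hW : δ / β < W)
    (hρ₁ : 0 < ρ₁) (hρ : ρ₁ < ρ₂)
    (u : ℝ → ℝ) (hu : ContDiff ℝ 2 u) (hu0 : u 0 = 0)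
    (hu' : ∀ x : ℝ, 0 ≤ x → x < W → 0 < deriv u x) (huW : deriv u W = 0)
    (hu'' : ∀ x : ℝ, 0 ≤ x → x ≤ W → deriv (deriv u) x < 0)
    (a₁ a₂ : ℝ)
    (ha₁ : a₁ ∈ Set.Ioo (δ / β) W)
    (heq₁ : u a₁ / deriv u a₁ - a₁ = (ρ₁ + δ) / (β - δ / a₁))
    (ha₂ : a₂ ∈ Set.Ioo (δ / β) W)
    (heq₂ : u a₂ / deriv u a₂ - a₂ = (ρ₂ + δ) / (β - δ / a₂)) :
    a₁ < a₂ := by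
  obtain ⟨hb1, hb2⟩ := ha₁
  obtain ⟨hc1, hc2⟩ := ha₂
  have hδβ : 0 < δ / β := div_pos hδ hβ
  have ha₁0 : 0 < a₁ := hδβ.trans hb1
  have ha₂0 : 0 < a₂ := hδβ.trans hc1
  have hd1 : Differentiable ℝ u := hu.differentiable (by norm_num)
  have h2 : ContDiff ℝ 1 (deriv u) := by
    have h : ContDiff ℝ ((1 : ℕ) + 1) u := by exact_mod_cast hu
    exact (contDiff_succ_iff_deriv.mp h).2.2
  have hd2 : Differentiable ℝ (deriv u) := h2.differentiable one_ne_zero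
  -- u is positive on (0, W]
  have humono : StrictMonoOn u (Set.Icc 0 W) :=
    strictMonoOn_of_deriv_pos (convex_Icc 0 W) hd1.continuous.continuousOn
      (fun x hx => by
        rw [interior_Icc] at hx
        exact hu' x hx.1.le hx.2)
  have hupos : ∀ x : ℝ, 0 < x → x ≤ W → 0 < u x := by
    intro x h0 hxW
    have hWpos : 0 ≤ W := (h0.trans_le hxW).le
    have := humono (Set.left_mem_Icc.mpr hWpos) ⟨h0.le, hxW⟩ h0
    simpa [hu0] using this
  -- denominators
  have hD₁ : 0 < β - δ / a₁ := by
    have : δ / a₁ < β := by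
      rw [div_lt_iff₀ ha₁0]
      rw [div_lt_iff₀ hβ] at hb1
      linarith
    linarith
  have hD₂ : 0 < β - δ / a₂ := by
    have : δ / a₂ < β := by
      rw [div_lt_iff₀ ha₂0]
      rw [div_lt_iff₀ hβ] at hc1
      linarith
    linarith
  by_contra hcon
  push_neg at hcon
  rcases eq_or_lt_of_le hcon with heq | hlt
  · -- a₂ = a₁ : equations force ρ₁ = ρ₂
    subst heq
    have h := heq₁.symm.trans heq₂
    rw [div_eq_div_iff hD₂.ne' hD₂.ne'] at h
    nlinarith [hD₂]
  · -- a₂ < a₁ : g strictly increasing, RHS comparison gives contradiction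
    set g : ℝ → ℝ := fun a => u a / deriv u a - a with hg
    have hgmono : StrictMonoOn g (Set.Icc a₂ a₁) := by
      apply strictMonoOn_of_deriv_pos (convex_Icc a₂ a₁)
      · apply ContinuousOn.sub _ continuousOn_id
        apply ContinuousOn.div hd1.continuous.continuousOn hd2.continuous.continuousOn
        intro x hx
        exact (hu' x (ha₂0.le.trans hx.1) (hx.2.trans_lt hb2)).ne'
      · intro x hx
        rw [interior_Icc] at hx
        have hx0 : 0 < x := ha₂0.trans hx.1
        have hxW : x < W := hx.2.trans hb2
        have hux' : 0 < deriv u x := hu' x hx0.le hxW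
        have hux : 0 < u x := hupos x hx0 hxW.le
        have huxx : deriv (deriv u) x < 0 := hu'' x hx0.le hxW.le
        have H : HasDerivAt g
            ((deriv u x * deriv u x - u x * deriv (deriv u) x) / (deriv u x) ^ 2 - 1) x :=
          ((hd1 x).hasDerivAt.div ((hd2 x).hasDerivAt) hux'.ne').sub (hasDerivAt_id x)
        rw [H.deriv]
        have h1 : (1 : ℝ) < (deriv u x * deriv u x - u x * deriv (deriv u) x) / (deriv u x) ^ 2 := by
          rw [lt_div_iff₀ (by positivity)]
          nlinarith
        linarith
    have hgle : g a₂ < g a₁ :=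
      hgmono (Set.left_mem_Icc.mpr hlt.le) (Set.right_mem_Icc.mpr hlt.le) hlt
    have hD : β - δ / a₂ < β - δ / a₁ := by
      have : δ / a₁ < δ / a₂ := div_lt_div_of_pos_left hδ ha₂0 hlt
      linarith
    have hRHS : (ρ₁ + δ) / (β - δ / a₁) < (ρ₂ + δ) / (β - δ / a₂) := by
      rw [div_lt_div_iff₀ hD₁ hD₂]
      nlinarith
    have hga₁ : g a₁ = (ρ₁ + δ) / (β - δ / a₁) := heq₁
    have hga₂ : g a₂ = (ρ₂ + δ) / (β - δ / a₂) := heq₂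
    rw [hga₁, hga₂] at hgle
    linarith
end

section
/- Let β > 0, ρ > 0, and let u : ℝ → ℝ be twice continuously differentiable with u(0) = 0, u'(x) > 0 for x ∈ [0, W), u'(W) = 0, and u''(x) < 0 for x ∈ [0, W]. Suppose 0 < δ₁ < δ₂ with W > δ₂/β, and let a₁, a₂ be the unique solutions in (δ₁/β, W) and (δ₂/β, W) respectively of u(a)/u'(a) − a = (ρ + δₖ)/(β − δₖ/a) for k = 1, 2. Then a₁ < a₂; that is, the conjectural-equilibrium degree a^CE is strictly increasing in the curing rate δ. -/
/-- **The conjectural-equilibrium degree is strictly increasing in the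
curing rate `δ`.**  If `0 < δ₁ < δ₂`, `W > δ₂/β`, and `aₖ ∈ (δₖ/β, W)` solves
`u(a)/u'(a) − a = (ρ + δₖ)/(β − δₖ/a)` for `k = 1, 2`, then `a₁ < a₂`. -/
theorem equilibrium_degree_increasing_in_delta
    (β ρ δ₁ δ₂ W : ℝ) (hβ : 0 < β) (hρ : 0 < ρ)
    (hδ₁ : 0 < δ₁) (hδ : δ₁ < δ₂) (hW : δ₂ / β < W)
    (u : ℝ → ℝ) (hu : ContDiff ℝ 2 u) (hu0 : u 0 = 0)
    (hu' : ∀ x : ℝ, 0 ≤ x → x < W → 0 < deriv u x) (huW : deriv u W = 0)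
    (hu'' : ∀ x : ℝ, 0 ≤ x → x ≤ W → deriv (deriv u) x < 0)
    (a₁ a₂ : ℝ)
    (ha₁ : a₁ ∈ Set.Ioo (δ₁ / β) W)
    (heq₁ : u a₁ / deriv u a₁ - a₁ = (ρ + δ₁) / (β - δ₁ / a₁))
    (ha₂ : a₂ ∈ Set.Ioo (δ₂ / β) W)
    (heq₂ : u a₂ / deriv u a₂ - a₂ = (ρ + δ₂) / (β - δ₂ / a₂)) :
    a₁ < a₂ := by
  obtain ⟨h1l, h1r⟩ := ha₁
  obtain ⟨h2l, h2r⟩ := ha₂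
  have hδ₂ : 0 < δ₂ := hδ₁.trans hδ
  have ha₂pos : 0 < a₂ := lt_trans (div_pos hδ₂ hβ) h2l
  have ha₁pos : 0 < a₁ := lt_trans (div_pos hδ₁ hβ) h1l
  have hud : Differentiable ℝ u := hu.differentiable (by norm_num)
  have hu2 : ContDiff ℝ 1 (deriv u) :=
    ((contDiff_succ_iff_deriv).mp (by exact_mod_cast hu)).2.2
  -- deriv u is strictly decreasing on [0, W]
  have hanti : StrictAntiOn (deriv u) (Set.Icc 0 W) := by
    apply strictAntiOn_of_deriv_neg (convex_Icc 0 W) hu2.continuous.continuousOn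
    intro x hx
    rw [interior_Icc] at hx
    exact hu'' x hx.1.le hx.2.le
  -- positivity of derivatives
  have hp₁ : 0 < deriv u a₁ := hu' a₁ ha₁pos.le h1r
  have hp₂ : 0 < deriv u a₂ := hu' a₂ ha₂pos.le h2r
  -- u a₂ > 0 via MVT
  have hupos : 0 < u a₂ := by
    obtain ⟨c, hc, hceq⟩ := exists_deriv_eq_slope u ha₂pos
      (hud.continuous.continuousOn) (hud.differentiableOn)
    have hcpos : 0 < deriv u c := hu' c hc.1.le (hc.2.trans h2r)
    rw [hceq, hu0, sub_zero, sub_zero] at hcpos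
    have := mul_pos hcpos ha₂pos
    rwa [div_mul_cancel₀ _ (ne_of_gt ha₂pos)] at this
  -- denominators positive
  have hβa₂ : δ₂ < β * a₂ := by
    have := (div_lt_iff₀ hβ).mp h2l
    linarith [mul_comm a₂ β]
  have hden₂ : 0 < β - δ₂ / a₂ := by
    have : δ₂ / a₂ < β := (div_lt_iff₀ ha₂pos).mpr hβa₂
    linarith
  have hden₁₂ : 0 < β - δ₁ / a₂ := by
    have h' : δ₁ / a₂ < δ₂ / a₂ := by gcongr
    linarith
  have hden₁₁ : 0 < β - δ₁ / a₁ := by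
    have := (div_lt_iff₀ hβ).mp h1l
    have : δ₁ / a₁ < β := by rw [div_lt_iff₀ ha₁pos]; linarith [mul_comm a₁ β]
    linarith
  -- main argument: suppose a₂ ≤ a₁
  by_contra hcon
  push_neg at hcon
  -- Step 1 : LHS monotone : u a₂ / u' a₂ - a₂ ≤ u a₁ / u' a₁ - a₁
  have step1 : u a₂ / deriv u a₂ - a₂ ≤ u a₁ / deriv u a₁ - a₁ := by
    rcases eq_or_lt_of_le hcon with heq | hlt
    · rw [heq]
    · -- strict concavity inequality via MVT
      obtain ⟨c, hc, hceq⟩ := exists_deriv_eq_slope u hlt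
        (hud.continuous.continuousOn) (hud.differentiableOn)
      have hcmem : c ∈ Set.Icc (0:ℝ) W := ⟨(ha₂pos.trans hc.1).le, (hc.2.trans h1r).le⟩
      have ha₁mem : a₁ ∈ Set.Icc (0:ℝ) W := ⟨ha₁pos.le, h1r.le⟩
      have hlt' : deriv u a₁ < deriv u c := hanti hcmem ha₁mem hc.2
      have hMVT : deriv u a₁ * (a₁ - a₂) < u a₁ - u a₂ := by
        have h1 : deriv u c * (a₁ - a₂) = u a₁ - u a₂ := by
          rw [hceq, div_mul_cancel₀ _ (by linarith : a₁ - a₂ ≠ 0)]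
        nlinarith
      have hq : deriv u a₁ < deriv u a₂ := by
        have ha₂mem : a₂ ∈ Set.Icc (0:ℝ) W := ⟨ha₂pos.le, h2r.le⟩
        exact hanti ha₂mem ha₁mem hlt
      -- u a₂ / q ≤ u a₂ / p  with p = deriv u a₁ ≤ q = deriv u a₂
      have hdiv1 : u a₂ / deriv u a₂ ≤ u a₂ / deriv u a₁ :=
        div_le_div_of_nonneg_left hupos.le hp₁ hq.le
      have hdiv2 : u a₂ / deriv u a₁ + (a₁ - a₂) < u a₁ / deriv u a₁ := by
        rw [div_add' _ _ _ (ne_of_gt hp₁), div_lt_div_iff₀ hp₁ hp₁]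
        nlinarith
      linarith
  -- Step 2 : RHS comparisons
  have step2a : (ρ + δ₁) / (β - δ₁ / a₁) ≤ (ρ + δ₁) / (β - δ₁ / a₂) := by
    apply div_le_div_of_nonneg_left (by linarith) hden₁₂
    have : δ₁ / a₁ ≤ δ₁ / a₂ := div_le_div_of_nonneg_left hδ₁.le ha₂pos hcon
    linarith
  have step2b : (ρ + δ₁) / (β - δ₁ / a₂) < (ρ + δ₂) / (β - δ₂ / a₂) := by
    rw [div_lt_div_iff₀ hden₁₂ hden₂]
    have hd : δ₁ / a₂ < δ₂ / a₂ := by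
      rw [div_lt_div_iff₀ ha₂pos ha₂pos]; nlinarith
    nlinarith [div_pos hδ₁ ha₂pos, div_pos hδ₂ ha₂pos]
  linarith [heq₁ ▸ step1, heq₂]
end

section
/- Let δ > 0, ρ > 0, and let u : ℝ → ℝ be twice continuously differentiable with u(0) = 0, u'(x) > 0 for x ∈ [0, W), u'(W) = 0, and u''(x) < 0 for x ∈ [0, W]. Suppose 0 < β₁ < β₂ with W > δ/β₁, and let a₁, a₂ be the unique solutions in (δ/β₁, W) and (δ/β₂, W) respectively of u(a)/u'(a) − a = (ρ + δ)/(βₖ − δ/a) for k = 1, 2. Then a₁ > a₂; that is, the conjectural-equilibrium degree a^CE is strictly decreasing in the infection rate β. -/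
/-- **The conjectural-equilibrium degree is strictly decreasing in the
infection rate `β`.**  If `0 < β₁ < β₂`, `W > δ/β₁`, and `aₖ ∈ (δ/βₖ, W)`
solves `u(a)/u'(a) − a = (ρ + δ)/(βₖ − δ/a)` for `k = 1, 2`, then `a₁ > a₂`. -/
theorem equilibrium_degree_decreasing_in_beta
    (δ ρ β₁ β₂ W : ℝ) (hδ : 0 < δ) (hρ : 0 < ρ)
    (hβ₁ : 0 < β₁) (hβ : β₁ < β₂) (hW : δ / β₁ < W)
    (u : ℝ → ℝ) (hu : ContDiff ℝ 2 u) (hu0 : u 0 = 0)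
    (hu' : ∀ x : ℝ, 0 ≤ x → x < W → 0 < deriv u x) (huW : deriv u W = 0)
    (hu'' : ∀ x : ℝ, 0 ≤ x → x ≤ W → deriv (deriv u) x < 0)
    (a₁ a₂ : ℝ)
    (ha₁ : a₁ ∈ Set.Ioo (δ / β₁) W)
    (heq₁ : u a₁ / deriv u a₁ - a₁ = (ρ + δ) / (β₁ - δ / a₁))
    (ha₂ : a₂ ∈ Set.Ioo (δ / β₂) W)
    (heq₂ : u a₂ / deriv u a₂ - a₂ = (ρ + δ) / (β₂ - δ / a₂)) :
    a₂ < a₁ := by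
  by_contra hcon
  push_neg at hcon
  obtain ⟨h1l, h1r⟩ := ha₁
  obtain ⟨h2l, h2r⟩ := ha₂
  have hβ₂ : 0 < β₂ := hβ₁.trans hβ
  have ha₁pos : 0 < a₁ := lt_trans (div_pos hδ hβ₁) h1l
  have ha₂pos : 0 < a₂ := lt_of_lt_of_le ha₁pos hcon
  have hWpos : 0 < W := lt_trans (div_pos hδ hβ₁) hW
  -- differentiability facts
  have hu2 : ContDiff ℝ ((1:ℕ)+1) u := by exact_mod_cast hu
  have hud : Differentiable ℝ u := hu.differentiable (by norm_num)
  have hu'c : ContDiff ℝ (1:ℕ) (deriv u) := (contDiff_succ_iff_deriv.mp hu2).2.2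
  have hu'd : Differentiable ℝ (deriv u) := hu'c.differentiable (by norm_num)
  -- u strictly increasing on [0, W], hence positive on (0, W)
  have humono : StrictMonoOn u (Set.Icc 0 W) := by
    apply strictMonoOn_of_deriv_pos (convex_Icc 0 W) hud.continuous.continuousOn
    intro x hx
    rw [interior_Icc] at hx
    exact hu' x hx.1.le hx.2
  have hupos : ∀ x : ℝ, 0 < x → x < W → 0 < u x := fun x hx hxW => by
    have := humono (Set.mem_Icc.mpr ⟨le_rfl, hWpos.le⟩) (Set.mem_Icc.mpr ⟨hx.le, hxW.le⟩) hx
    rwa [hu0] at this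
  set F : ℝ → ℝ := fun a => u a / deriv u a - a with hF
  -- deriv of F
  have hFderiv : ∀ x : ℝ, 0 < x → x < W →
      HasDerivAt F (-(u x * deriv (deriv u) x) / (deriv u x)^2) x := by
    intro x hx hxW
    have hne : deriv u x ≠ 0 := (hu' x hx.le hxW).ne'
    have h1 : HasDerivAt u (deriv u x) x := (hud x).hasDerivAt
    have h2 : HasDerivAt (deriv u) (deriv (deriv u) x) x := (hu'd x).hasDerivAt
    have := ((h1.div h2 hne).sub (hasDerivAt_id x))
    convert this using 1
    · rfl
    · rfl
    · rfl
    field_simp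
    ring
  -- F strictly monotone on [a₁, a₂]
  have hmono : StrictMonoOn F (Set.Icc a₁ a₂) := by
    apply strictMonoOn_of_deriv_pos (convex_Icc a₁ a₂)
    · apply ContinuousOn.sub _ continuousOn_id
      apply ContinuousOn.div hud.continuous.continuousOn hu'd.continuous.continuousOn
      intro x hx
      exact (hu' x (ha₁pos.le.trans hx.1) (lt_of_le_of_lt hx.2 h2r)).ne'
    · intro x hx
      rw [interior_Icc] at hx
      have hxpos : 0 < x := ha₁pos.trans hx.1
      have hxW : x < W := hx.2.trans h2r
      rw [(hFderiv x hxpos hxW).deriv]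
      apply div_pos
      · have := mul_neg_of_pos_of_neg (hupos x hxpos hxW) (hu'' x hxpos.le hxW.le)
        linarith
      · exact pow_pos (hu' x hxpos.le hxW) 2
  have hFle : F a₁ ≤ F a₂ := by
    rcases hcon.eq_or_lt with he | hlt
    · rw [he]
    · exact (hmono (Set.mem_Icc.mpr ⟨le_rfl, hcon⟩) (Set.mem_Icc.mpr ⟨hcon, le_rfl⟩) hlt).le
  -- denominators
  have hd₁ : 0 < β₁ - δ / a₁ := by
    have : δ / a₁ < β₁ := by
      rw [div_lt_iff₀ ha₁pos]
      rw [div_lt_iff₀ hβ₁] at h1l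
      linarith [h1l]
    linarith
  have hd : β₁ - δ / a₁ < β₂ - δ / a₂ := by
    have : δ / a₂ ≤ δ / a₁ := div_le_div_of_nonneg_left hδ.le ha₁pos hcon
    linarith
  have : (ρ + δ) / (β₂ - δ / a₂) < (ρ + δ) / (β₁ - δ / a₁) :=
    div_lt_div_of_pos_left (by linarith) hd₁ hd
  have e1 : F a₁ = (ρ + δ) / (β₁ - δ / a₁) := heq₁
  have e2 : F a₂ = (ρ + δ) / (β₂ - δ / a₂) := heq₂
  linarith [hFle, e1 ▸ e2 ▸ hFle]
end

section
/- Let β > 0, δ > 0, ρ > 0, and let u : ℝ → ℝ be twice continuously differentiable with u(0) = 0, u'(x) > 0 for x ∈ [0, W), u'(W) = 0, and u''(x) < 0 for x ∈ [0, W]. Then for every θ ∈ (0, 1] there exists a unique a*(θ) ∈ (0, W) satisfying u(a)/u'(a) − a = (ρ + δ)/(β·θ), and the resulting best-response function θ ↦ a*(θ) is strictly decreasing on (0, 1]. -/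
open Set

/-- **Existence, uniqueness and monotonicity of the best response.**
For every infection level `θ ∈ (0, 1]` there is a unique `a*(θ) ∈ (0, W)`
satisfying `u(a)/u'(a) − a = (ρ + δ)/(β·θ)`, and the best-response map
`θ ↦ a*(θ)` is strictly decreasing on `(0, 1]`. -/
theorem best_response_exists_unique_and_decreasing
    (β δ ρ W : ℝ) (hβ : 0 < β) (hδ : 0 < δ) (hρ : 0 < ρ) (hW : 0 < W)
    (u : ℝ → ℝ) (hu : ContDiff ℝ 2 u) (hu0 : u 0 = 0)
    (hu' : ∀ x : ℝ, 0 ≤ x → x < W → 0 < deriv u x) (huW : deriv u W = 0)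
    (hu'' : ∀ x : ℝ, 0 ≤ x → x ≤ W → deriv (deriv u) x < 0) :
    (∀ θ ∈ Set.Ioc (0 : ℝ) 1, ∃! a : ℝ, a ∈ Set.Ioo 0 W ∧
      u a / deriv u a - a = (ρ + δ) / (β * θ)) ∧
    (∀ θ₁ θ₂ a₁ a₂ : ℝ, 0 < θ₁ → θ₁ < θ₂ → θ₂ ≤ 1 →
      a₁ ∈ Set.Ioo 0 W → a₂ ∈ Set.Ioo 0 W →
      u a₁ / deriv u a₁ - a₁ = (ρ + δ) / (β * θ₁) →
      u a₂ / deriv u a₂ - a₂ = (ρ + δ) / (β * θ₂) →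
      a₂ < a₁) := by
  -- basic differentiability facts
  obtain ⟨hu_diff, -, hf_cd⟩ :=
    (contDiff_succ_iff_deriv (n := 1)).mp (by exact_mod_cast hu)
  have hf_diff : Differentiable ℝ (deriv u) := hf_cd.differentiable one_ne_zero
  have hf_cont : Continuous (deriv u) := hf_diff.continuous
  have hu_cont : Continuous u := hu_diff.continuous
  -- u is strictly increasing on [0,W]
  have humono : StrictMonoOn u (Icc 0 W) := by
    apply strictMonoOn_of_deriv_pos (convex_Icc 0 W) hu_cont.continuousOn
    intro x hx
    rw [interior_Icc] at hx
    exact hu' x hx.1.le hx.2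
  have hupos : ∀ a ∈ Ioc (0:ℝ) W, 0 < u a := by
    intro a ha
    have := humono (left_mem_Icc.mpr hW.le) ⟨ha.1.le, ha.2⟩ ha.1
    rwa [hu0] at this
  set g : ℝ → ℝ := fun a => u a / deriv u a - a with hg
  have hgcont : ContinuousOn g (Ico 0 W) := by
    apply ContinuousOn.sub
    · exact ContinuousOn.div hu_cont.continuousOn hf_cont.continuousOn
        (fun x hx => (hu' x hx.1 hx.2).ne')
    · exact continuousOn_id
  have hg_deriv : ∀ a ∈ Ioo (0:ℝ) W,
      HasDerivAt g ((deriv u a * deriv u a - u a * deriv (deriv u) a)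
        / (deriv u a)^2 - 1) a := by
    intro a ha
    have h1 : HasDerivAt u (deriv u a) a := (hu_diff a).hasDerivAt
    have h2 : HasDerivAt (deriv u) (deriv (deriv u) a) a := (hf_diff a).hasDerivAt
    have hne : deriv u a ≠ 0 := (hu' a ha.1.le ha.2).ne'
    exact (h1.div h2 hne).sub (hasDerivAt_id a)
  have hgmono : StrictMonoOn g (Ico 0 W) := by
    apply strictMonoOn_of_deriv_pos (convex_Ico 0 W) hgcont
    intro a ha
    rw [interior_Ico] at ha
    rw [(hg_deriv a ha).deriv]
    have hp : 0 < deriv u a := hu' a ha.1.le ha.2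
    have hq : 0 < u a := hupos a ⟨ha.1, ha.2.le⟩
    have hr : deriv (deriv u) a < 0 := hu'' a ha.1.le ha.2.le
    rw [sub_pos, lt_div_iff₀ (by positivity)]
    nlinarith
  have hg0 : g 0 = 0 := by simp [hg, hu0]
  -- for any c > 0, there is a point a₀ ∈ (0, W) with c < g a₀
  have hbig : ∀ c : ℝ, 0 < c → ∃ a₀ ∈ Ioo (0:ℝ) W, c < g a₀ := by
    intro c hc
    set m := u (W/2) with hm
    have hmpos : 0 < m := hupos _ ⟨by linarith, by linarith⟩
    have hεpos : 0 < m / (c + W + 1) := by positivity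
    obtain ⟨d, hd, hdball⟩ := Metric.continuousAt_iff.mp hf_cont.continuousAt
      (m / (c + W + 1)) hεpos
    set a₀ := max (W/2) (W - d/2) with ha₀
    have ha₀lt : a₀ < W := by
      apply max_lt <;> linarith
    have ha₀ge : W/2 ≤ a₀ := le_max_left _ _
    have ha₀pos : 0 < a₀ := lt_of_lt_of_le (by linarith) ha₀ge
    have hfsmall : deriv u a₀ < m / (c + W + 1) := by
      have : dist a₀ W < d := by
        rw [Real.dist_eq, abs_of_nonpos (by linarith)]
        have : W - d/2 ≤ a₀ := le_max_right _ _
        linarith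
      have := hdball this
      rw [Real.dist_eq, huW, sub_zero] at this
      calc deriv u a₀ ≤ |deriv u a₀| := le_abs_self _
        _ < m / (c + W + 1) := this
    have hfpos : 0 < deriv u a₀ := hu' a₀ ha₀pos.le ha₀lt
    have hmle : m ≤ u a₀ := by
      rcases eq_or_lt_of_le ha₀ge with h | h
      · rw [← h]
      · exact (humono ⟨by linarith, by linarith⟩ ⟨ha₀pos.le, ha₀lt.le⟩ h).le
    refine ⟨a₀, ⟨ha₀pos, ha₀lt⟩, ?_⟩
    have h1 : m / (m / (c + W + 1)) < m / deriv u a₀ :=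
      div_lt_div_of_pos_left hmpos hfpos hfsmall
    have h2 : m / (m / (c + W + 1)) = c + W + 1 := by
      field_simp
    have h3 : m / deriv u a₀ ≤ u a₀ / deriv u a₀ := by gcongr
    show c < u a₀ / deriv u a₀ - a₀
    nlinarith [h1, h2, h3]
  constructor
  · rintro θ ⟨hθ0, hθ1⟩
    set c := (ρ + δ) / (β * θ) with hc
    have hcpos : 0 < c := by positivity
    obtain ⟨a₀, ha₀, hca₀⟩ := hbig c hcpos
    obtain ⟨a, haIoo, hga⟩ : ∃ a ∈ Ioo (0:ℝ) a₀, g a = c := by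
      have hsub : Icc (0:ℝ) a₀ ⊆ Ico 0 W := fun x hx => ⟨hx.1, lt_of_le_of_lt hx.2 ha₀.2⟩
      have := intermediate_value_Ioo (le_of_lt ha₀.1) (hgcont.mono hsub)
      have hmem : c ∈ Ioo (g 0) (g a₀) := by
        constructor
        · rw [hg0]; exact hcpos
        · exact hca₀
      obtain ⟨a, ha, hga⟩ := this hmem
      exact ⟨a, ha, hga⟩
    have haW : a ∈ Ioo (0:ℝ) W := ⟨haIoo.1, haIoo.2.trans ha₀.2⟩
    refine ⟨a, ⟨haW, hga⟩, ?_⟩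
    rintro b ⟨hbW, hgb⟩
    refine hgmono.injOn ⟨hbW.1.le, hbW.2⟩ ⟨haW.1.le, haW.2⟩ ?_
    show u b / deriv u b - b = u a / deriv u a - a
    have hga' : u a / deriv u a - a = c := hga
    rw [hgb, hga']
  · intro θ₁ θ₂ a₁ a₂ hθ₁ hlt hθ₂ ha₁ ha₂ he₁ he₂
    have hc : (ρ + δ) / (β * θ₂) < (ρ + δ) / (β * θ₁) :=
      div_lt_div_of_pos_left (by positivity) (by positivity)
        (by nlinarith)
    by_contra h
    push_neg at h
    have h' : u a₁ / deriv u a₁ - a₁ ≤ u a₂ / deriv u a₂ - a₂ :=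
      hgmono.monotoneOn ⟨ha₁.1.le, ha₁.2⟩ ⟨ha₂.1.le, ha₂.2⟩ h
    rw [he₁, he₂] at h'
    linarith
end

section
/- Let β > 0, δ > 0, ρ > 0, and let u : ℝ → ℝ be twice continuously differentiable with u(0) = 0, u'(x) > 0 for x ∈ [0, W), u'(W) = 0, u''(x) < 0 for x ∈ [0, W], and W > δ/β. Let a* : (0, 1] → (0, W) be the best-response function, i.e., for each θ, u(a*(θ))/u'(a*(θ)) − a*(θ) = (ρ + δ)/(β·θ). Then: (i) there exists a unique θ* ∈ (0, 1) with (1 − θ*)·β·a*(θ*) = δ, and a*(θ*) equals the conjectural-equilibrium degree a^CE (the unique solution in (δ/β, W) of u(a)/u'(a) − a = (ρ + δ)/(β − δ/a)); (ii) every differentiable f : [0, ∞) → (0, 1) satisfying the best-response dynamics f'(t) = f(t)·((1 − f(t))·β·a*(f(t)) − δ) with f(0) ∈ (0, 1) converges to θ* as t → ∞. -/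
set_option maxHeartbeats 1000000


/-- **Convergence of the best-response dynamics to the conjectural equilibrium.**
Let `a* : (0,1] → (0,W)` be the best-response function and `a^CE` the
conjectural-equilibrium degree.  Then (i) there is a unique `θ* ∈ (0,1)` with
`(1 − θ*)·β·a*(θ*) = δ`, and at this `θ*` one has `a*(θ*) = a^CE`;
(ii) every solution `f` of the best-response dynamics
`f' = f·((1 − f)·β·a*(f) − δ)` with values in `(0,1)` converges to `θ*`. -/
theorem best_response_dynamics_converges
    (β δ ρ W : ℝ) (hβ : 0 < β) (hδ : 0 < δ) (hρ : 0 < ρ) (hW : δ / β < W)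
    (u : ℝ → ℝ) (hu : ContDiff ℝ 2 u) (hu0 : u 0 = 0)
    (hu' : ∀ x : ℝ, 0 ≤ x → x < W → 0 < deriv u x) (huW : deriv u W = 0)
    (hu'' : ∀ x : ℝ, 0 ≤ x → x ≤ W → deriv (deriv u) x < 0)
    (astar : ℝ → ℝ)
    (hastar : ∀ θ : ℝ, 0 < θ → θ ≤ 1 → astar θ ∈ Set.Ioo 0 W ∧
      u (astar θ) / deriv u (astar θ) - astar θ = (ρ + δ) / (β * θ))
    (aCE : ℝ) (haCE : aCE ∈ Set.Ioo (δ / β) W)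
    (heqCE : u aCE / deriv u aCE - aCE = (ρ + δ) / (β - δ / aCE)) :
    (∃! θs : ℝ, θs ∈ Set.Ioo (0 : ℝ) 1 ∧ (1 - θs) * β * astar θs = δ) ∧
    (∀ θs ∈ Set.Ioo (0 : ℝ) 1, (1 - θs) * β * astar θs = δ →
      astar θs = aCE ∧
      (∀ f : ℝ → ℝ, (∀ t : ℝ, 0 ≤ t → f t ∈ Set.Ioo (0 : ℝ) 1) →
        (∀ t : ℝ, 0 ≤ t →
          HasDerivAt f (f t * ((1 - f t) * β * astar (f t) - δ)) t) →
        f 0 ∈ Set.Ioo (0 : ℝ) 1 →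
        Filter.Tendsto f Filter.atTop (nhds θs))) := by
  -- ## Analytic preliminaries
  have hab : 0 < δ / β := div_pos hδ hβ
  have hW0 : 0 < W := hab.trans hW
  have hud : Differentiable ℝ u := hu.differentiable (by norm_num)
  have hu1 : ContDiff ℝ 1 (deriv u) := by
    have h2 : ContDiff ℝ ((1 : ℕ∞) + 1) u := by exact_mod_cast hu
    exact (contDiff_succ_iff_deriv.mp h2).2.2
  have hu'diff : Differentiable ℝ (deriv u) := hu1.differentiable (by norm_num)
  have hu'cont : Continuous (deriv u) := hu'diff.continuous
  have hantiu' : StrictAntiOn (deriv u) (Set.Icc 0 W) :=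
    strictAntiOn_of_deriv_neg (convex_Icc 0 W) hu'cont.continuousOn
      (fun x hx => by rw [interior_Icc] at hx; exact hu'' x hx.1.le hx.2.le)
  have hfder : ∀ x : ℝ, HasDerivAt (fun y => u y - y * deriv u y)
      (-(x * deriv (deriv u) x)) x := by
    intro x
    have h3 : HasDerivAt (fun y => u y - y * deriv u y)
        (deriv u x - (1 * deriv u x + x * deriv (deriv u) x)) x :=
      ((hud x).hasDerivAt).sub ((hasDerivAt_id x).mul (hu'diff x).hasDerivAt)
    convert h3 using 1
    ring
  have hfm : StrictMonoOn (fun x => u x - x * deriv u x) (Set.Icc 0 W) := by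
    apply strictMonoOn_of_deriv_pos (convex_Icc 0 W)
    · exact (hud.continuous.sub (continuous_id.mul hu'cont)).continuousOn
    · intro x hx
      rw [interior_Icc] at hx
      rw [(hfder x).deriv]
      nlinarith [hu'' x hx.1.le hx.2.le, hx.1]
  have hfpos : ∀ a : ℝ, 0 < a → a ≤ W → 0 < u a - a * deriv u a := by
    intro a h1 h2
    have := hfm (Set.left_mem_Icc.mpr hW0.le) ⟨h1.le, h2⟩ h1
    simpa [hu0] using this
  have hgrw : ∀ a : ℝ, 0 < a → a < W →
      u a / deriv u a - a = (u a - a * deriv u a) / deriv u a := by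
    intro a h1 h2
    have h3 := (hu' a h1.le h2).ne'
    field_simp
  -- strict monotonicity of `g a = u a / u' a - a` on `(0, W)`
  have hgmono : ∀ a b : ℝ, 0 < a → a < b → b < W →
      u a / deriv u a - a < u b / deriv u b - b := by
    intro a b h1 h2 h3
    rw [hgrw a h1 (h2.trans h3), hgrw b (h1.trans h2) h3]
    have hb0 : 0 < b := h1.trans h2
    have hua := hu' a h1.le (h2.trans h3)
    have hub := hu' b hb0.le h3
    have hanti : deriv u b < deriv u a := hantiu' ⟨h1.le, (h2.trans h3).le⟩ ⟨hb0.le, h3.le⟩ h2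
    have hfa : 0 < u a - a * deriv u a := hfpos a h1 (h2.trans h3).le
    have hfab : u a - a * deriv u a < u b - b * deriv u b :=
      hfm ⟨h1.le, (h2.trans h3).le⟩ ⟨hb0.le, h3.le⟩ h2
    rw [div_lt_div_iff₀ hua hub]
    nlinarith
  have hgmono_le : ∀ a b : ℝ, 0 < a → a ≤ b → b < W →
      u a / deriv u a - a ≤ u b / deriv u b - b := by
    intro a b h1 h2 h3
    rcases eq_or_lt_of_le h2 with he | hl
    · rw [he]
    · exact (hgmono a b h1 hl h3).le
  have hginj : ∀ a b : ℝ, 0 < a → a < W → 0 < b → b < W →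
      u a / deriv u a - a = u b / deriv u b - b → a = b := by
    intro a b ha1 ha2 hb1 hb2 heq
    rcases lt_trichotomy a b with h | h | h
    · exact absurd heq (ne_of_lt (hgmono a b ha1 h hb2))
    · exact h
    · exact absurd heq.symm (ne_of_lt (hgmono b a hb1 h ha2))
  -- ## `astar` is strictly decreasing
  have hastar_anti : ∀ θ1 θ2 : ℝ, 0 < θ1 → θ1 < θ2 → θ2 ≤ 1 → astar θ2 < astar θ1 := by
    intro θ1 θ2 h1 h2 h3
    obtain ⟨hm1, he1⟩ := hastar θ1 h1 (h2.le.trans h3)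
    obtain ⟨hm2, he2⟩ := hastar θ2 (h1.trans h2) h3
    by_contra hcon
    push_neg at hcon
    have hlt : (ρ + δ) / (β * θ2) < (ρ + δ) / (β * θ1) :=
      div_lt_div_of_pos_left (by linarith) (by positivity) ((mul_lt_mul_iff_right₀ hβ).mpr h2)
    rcases eq_or_lt_of_le hcon with he | hl
    · rw [← he, he1] at he2
      linarith
    · have := hgmono (astar θ1) (astar θ2) hm1.1 hl hm2.2
      rw [he1, he2] at this
      linarith
  -- ## `F θ = (1-θ)·β·astar θ` is strictly decreasing on `(0,1]`
  have hFanti : ∀ θ1 θ2 : ℝ, 0 < θ1 → θ1 < θ2 → θ2 ≤ 1 →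
      (1 - θ2) * β * astar θ2 < (1 - θ1) * β * astar θ1 := by
    intro θ1 θ2 h1 h2 h3
    have ha := hastar_anti θ1 θ2 h1 h2 h3
    have hp2 : 0 < astar θ2 := (hastar θ2 (h1.trans h2) h3).1.1
    have h1θ : θ1 < 1 := lt_of_lt_of_le h2 h3
    nlinarith [mul_pos hβ (mul_pos (sub_pos.mpr h1θ) (sub_pos.mpr ha)),
      mul_pos hβ (mul_pos (sub_pos.mpr h2) hp2)]
  -- ## at any fixed point, `astar θs = aCE`
  have hCE : ∀ θs : ℝ, θs ∈ Set.Ioo (0 : ℝ) 1 → (1 - θs) * β * astar θs = δ →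
      astar θs = aCE := by
    intro θs hθs heq
    obtain ⟨hm, he⟩ := hastar θs hθs.1 hθs.2.le
    have ha0 : 0 < astar θs := hm.1
    have hkey : β * θs = β - δ / astar θs := by
      field_simp
      nlinarith [heq]
    rw [hkey] at he
    have haint : δ / β < astar θs := by
      rw [div_lt_iff₀ hβ]
      nlinarith [mul_pos hβ ha0, hθs.1]
    have hmono2 : ∀ a b : ℝ, δ / β < a → a < b → b < W →
        u a / deriv u a - a < u b / deriv u b - b ∧
          (ρ + δ) / (β - δ / b) < (ρ + δ) / (β - δ / a) := by
      intro a b ha hbb hb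
      have ha0' : 0 < a := hab.trans ha
      have hβa : δ < a * β := (div_lt_iff₀ hβ).mp ha
      have hda : δ / a < β := (div_lt_iff₀ ha0').mpr (by linarith)
      have hdb : δ / b < δ / a := div_lt_div_of_pos_left hδ ha0' hbb
      exact ⟨hgmono a b ha0' hbb hb,
        div_lt_div_of_pos_left (by linarith) (by linarith) (by linarith)⟩
    rcases lt_trichotomy (astar θs) aCE with h | h | h
    · obtain ⟨hg1, hg2⟩ := hmono2 _ _ haint h haCE.2
      rw [he, heqCE] at hg1
      linarith
    · exact h
    · obtain ⟨hg1, hg2⟩ := hmono2 _ _ haCE.1 h hm.2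
      rw [he, heqCE] at hg1
      linarith
  -- ## Existence of a fixed point
  have hexists : ∃ θs : ℝ, θs ∈ Set.Ioo (0 : ℝ) 1 ∧ (1 - θs) * β * astar θs = δ := by
    -- choose `a0` strictly between `δ/β` and `W`
    set a0 : ℝ := (δ / β + W) / 2 with ha0def
    have ha0l : δ / β < a0 := by rw [ha0def]; linarith
    have ha0r : a0 < W := by rw [ha0def]; linarith
    have ha00 : 0 < a0 := hab.trans ha0l
    have hβa0 : δ < β * a0 := by
      have := (div_lt_iff₀ hβ).mp ha0l
      linarith
    set θ0 : ℝ := 1 - δ / (β * a0) with hθ0def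
    have hθ00 : 0 < θ0 := by
      rw [hθ0def, sub_pos, div_lt_one (by positivity)]
      exact hβa0
    set C : ℝ := (ρ + δ) / (β * θ0) with hCdef
    have hC0 : 0 < C := by positivity
    set h0 : ℝ := u a0 - a0 * deriv u a0 with hh0def
    have hh00 : 0 < h0 := hfpos a0 ha00 ha0r.le
    -- find `a ∈ [a0, W)` where `u'` is small
    have hopen : IsOpen {x : ℝ | deriv u x < h0 / (C + 1)} :=
      isOpen_lt hu'cont continuous_const
    have hWmem : W ∈ {x : ℝ | deriv u x < h0 / (C + 1)} := by
      simp only [Set.mem_setOf_eq, huW]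
      positivity
    obtain ⟨ε, hε0, hball⟩ := Metric.isOpen_iff.mp hopen W hWmem
    set a : ℝ := max a0 (W - ε / 2) with hadef
    have haa0 : a0 ≤ a := le_max_left _ _
    have haW : a < W := by
      rw [hadef]
      apply max_lt ha0r
      linarith
    have ha0' : 0 < a := lt_of_lt_of_le ha00 haa0
    have hu'a : deriv u a < h0 / (C + 1) := by
      apply hball
      rw [Metric.mem_ball, Real.dist_eq, abs_lt]
      constructor
      · have : W - ε / 2 ≤ a := le_max_right _ _
        linarith
      · linarith [haW]
    have hu'apos : 0 < deriv u a := hu' a ha0'.le haW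
    -- `g a > C`
    have hga : C < u a / deriv u a - a := by
      rw [hgrw a ha0' haW]
      have hfa : h0 ≤ u a - a * deriv u a := by
        rcases eq_or_lt_of_le haa0 with he | hl
        · rw [hh0def, ← he]
        · exact (hfm ⟨ha00.le, ha0r.le⟩ ⟨ha0'.le, haW.le⟩ hl).le
      have h1 : deriv u a * (C + 1) < h0 := (lt_div_iff₀ (by positivity)).mp hu'a
      have h2 : C + 1 < h0 / deriv u a := by
        rw [lt_div_iff₀ hu'apos]
        nlinarith
      have h3 : h0 / deriv u a ≤ (u a - a * deriv u a) / deriv u a :=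
        (div_le_div_iff_of_pos_right hu'apos).mpr hfa
      linarith
    set ga : ℝ := u a / deriv u a - a with hgadef
    -- upper endpoint `θ2`
    set θ2 : ℝ := 1 - δ / (β * a) with hθ2def
    have hβa : δ < β * a := by nlinarith
    have hθ20 : 0 < θ2 := by
      rw [hθ2def, sub_pos, div_lt_one (by positivity)]
      exact hβa
    have hθ21 : θ2 < 1 := by
      rw [hθ2def]
      have : 0 < δ / (β * a) := by positivity
      linarith
    have hθ02 : θ0 ≤ θ2 := by
      rw [hθ0def, hθ2def, sub_le_sub_iff_left]
      exact div_le_div_of_nonneg_left hδ.le (mul_pos hβ ha00)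
        (mul_le_mul_of_nonneg_left haa0 hβ.le)
    -- lower endpoint `θ1`
    set θ1 : ℝ := min θ2 ((ρ + δ) / (β * (ga + 1))) with hθ1def
    have hga1 : 0 < ga + 1 := by linarith
    have hθ10 : 0 < θ1 := lt_min hθ20 (by positivity)
    have hθ12 : θ1 ≤ θ2 := min_le_left _ _
    -- the auxiliary function and its values at endpoints
    set aof : ℝ → ℝ := fun θ => δ / (β * (1 - θ)) with haofdef
    have haof2 : aof θ2 = a := by
      rw [haofdef, hθ2def]
      field_simp
      ring
      exact mul_inv_cancel₀ hδ.ne'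
    have haofmono : ∀ x y : ℝ, x ≤ y → y < 1 → aof x ≤ aof y := by
      intro x y hxy hy1
      rw [haofdef]
      exact div_le_div_of_nonneg_left hδ.le (mul_pos hβ (by linarith))
        (mul_le_mul_of_nonneg_left (by linarith) hβ.le)
    have haofpos : ∀ x : ℝ, x < 1 → 0 < aof x := by
      intro x hx
      rw [haofdef]
      exact div_pos hδ (mul_pos hβ (by linarith))
    set Φ : ℝ → ℝ := fun θ => u (aof θ) / deriv u (aof θ) - aof θ - (ρ + δ) / (β * θ)
      with hΦdef
    have hΦ2 : 0 < Φ θ2 := by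
      rw [hΦdef]
      simp only [haof2]
      have hle : (ρ + δ) / (β * θ2) ≤ C := by
        rw [hCdef]
        exact div_le_div_of_nonneg_left (by linarith) (by positivity)
          (mul_le_mul_of_nonneg_left hθ02 hβ.le)
      rw [← hgadef]
      have h9 : (ρ + δ) / (β * θ2) < ga := lt_of_le_of_lt hle hga
      linarith [h9]
    have hΦ1 : Φ θ1 ≤ 0 := by
      rw [hΦdef]
      simp only
      have h1 : aof θ1 ≤ a := by
        rw [← haof2]
        exact haofmono θ1 θ2 hθ12 hθ21
      have h2 : u (aof θ1) / deriv u (aof θ1) - aof θ1 ≤ ga := by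
        rw [hgadef]
        exact hgmono_le (aof θ1) a (haofpos θ1 (lt_of_le_of_lt hθ12 hθ21)) h1 haW
      have h3 : ga + 1 ≤ (ρ + δ) / (β * θ1) := by
        rw [le_div_iff₀ (by positivity)]
        have h4 : θ1 ≤ (ρ + δ) / (β * (ga + 1)) := min_le_right _ _
        have h5 : θ1 * (β * (ga + 1)) ≤ ρ + δ := (le_div_iff₀ (by positivity)).mp h4
        nlinarith
      linarith
    -- continuity of `Φ` on `[θ1, θ2]`
    have haofcont : ContinuousOn aof (Set.Icc θ1 θ2) := by
      rw [haofdef]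
      apply ContinuousOn.div continuousOn_const
      · exact (continuous_const.mul (continuous_const.sub continuous_id)).continuousOn
      · intro x hx
        have : x < 1 := lt_of_le_of_lt hx.2 hθ21
        exact (mul_pos hβ (by linarith)).ne'
    have haofrange : ∀ x ∈ Set.Icc θ1 θ2, aof x ∈ Set.Ioo 0 W := by
      intro x hx
      refine ⟨haofpos x (lt_of_le_of_lt hx.2 hθ21), ?_⟩
      calc aof x ≤ aof θ2 := haofmono x θ2 hx.2 hθ21
        _ = a := haof2
        _ < W := haW
    have hΦcont : ContinuousOn Φ (Set.Icc θ1 θ2) := by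
      rw [hΦdef]
      apply ContinuousOn.sub
      apply ContinuousOn.sub
      · apply ContinuousOn.div
        · exact hud.continuous.comp_continuousOn haofcont
        · exact hu'cont.comp_continuousOn haofcont
        · intro x hx
          have := haofrange x hx
          exact (hu' (aof x) this.1.le this.2).ne'
      · exact haofcont
      · apply ContinuousOn.div continuousOn_const
          (continuous_const.mul continuous_id).continuousOn
        intro x hx
        have : 0 < x := lt_of_lt_of_le hθ10 hx.1
        exact (mul_pos hβ this).ne'
    -- intermediate value theorem
    have hIVT := intermediate_value_Icc hθ12 hΦcont
    have h0mem : (0 : ℝ) ∈ Φ '' Set.Icc θ1 θ2 := hIVT ⟨hΦ1, hΦ2.le⟩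
    obtain ⟨θs, hθsmem, hΦs⟩ := h0mem
    have hθs0 : 0 < θs := lt_of_lt_of_le hθ10 hθsmem.1
    have hθs1 : θs < 1 := lt_of_le_of_lt hθsmem.2 hθ21
    refine ⟨θs, ⟨hθs0, hθs1⟩, ?_⟩
    -- from `Φ θs = 0`, conclude `astar θs = aof θs`
    obtain ⟨hm, he⟩ := hastar θs hθs0 hθs1.le
    have haofs := haofrange θs hθsmem
    have heq2 : u (aof θs) / deriv u (aof θs) - aof θs =
        u (astar θs) / deriv u (astar θs) - astar θs := by
      rw [he]
      rw [hΦdef] at hΦs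
      simp only at hΦs
      linarith
    have hastareq : aof θs = astar θs :=
      hginj (aof θs) (astar θs) haofs.1 haofs.2 hm.1 hm.2 heq2
    rw [← hastareq, haofdef]
    have hne : (1 : ℝ) - θs ≠ 0 := by intro h; rw [sub_eq_zero] at h; exact hθs1.ne' h
    field_simp
  -- ## Assembling part (i)
  obtain ⟨θs0, hθs0mem, hθs0eq⟩ := hexists
  have huniq : ∀ y : ℝ, y ∈ Set.Ioo (0 : ℝ) 1 ∧ (1 - y) * β * astar y = δ → y = θs0 := by
    rintro y ⟨hy, hyeq⟩
    rcases lt_trichotomy y θs0 with h | h | h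
    · have := hFanti y θs0 hy.1 h hθs0mem.2.le
      rw [hyeq, hθs0eq] at this
      linarith
    · exact h
    · have := hFanti θs0 y hθs0mem.1 h hy.2.le
      rw [hyeq, hθs0eq] at this
      linarith
  refine ⟨⟨θs0, ⟨hθs0mem, hθs0eq⟩, huniq⟩, ?_⟩
  -- ## Part (ii)
  intro θs hθs hFs
  refine ⟨hCE θs hθs hFs, ?_⟩
  intro f hf hf' hf0
  -- sign facts for the vector field at values compared with `θs`
  have hVnn : ∀ x : ℝ, 0 < x → x ≤ θs → 0 ≤ (1 - x) * β * astar x - δ := by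
    intro x hx hxs
    rcases eq_or_lt_of_le hxs with he | hl
    · rw [he, hFs]; simp
    · have := hFanti x θs hx hl hθs.2.le
      rw [hFs] at this
      linarith
  have hVnp : ∀ x : ℝ, θs ≤ x → x ≤ 1 → (1 - x) * β * astar x - δ ≤ 0 := by
    intro x hxs hx1
    rcases eq_or_lt_of_le hxs with he | hl
    · rw [← he, hFs]; simp
    · have := hFanti θs x hθs.1 hl hx1
      rw [hFs] at this
      linarith
  -- barrier lemmas: solutions cannot cross `θs`
  have hbarU : ∀ t1 t2 : ℝ, 0 ≤ t1 → t1 ≤ t2 → f t1 ≤ θs → f t2 ≤ θs := by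
    intro t1 t2 ht1 ht12 hft1
    by_contra hcon
    push_neg at hcon
    have hfcOn : ContinuousOn f (Set.Icc t1 t2) := fun t ht =>
      ((hf' t (ht1.trans ht.1)).continuousAt).continuousWithinAt
    have hSclosed : IsClosed (Set.Icc t1 t2 ∩ f ⁻¹' Set.Iic θs) :=
      hfcOn.preimage_isClosed_of_isClosed isClosed_Icc isClosed_Iic
    have hSne : (Set.Icc t1 t2 ∩ f ⁻¹' Set.Iic θs).Nonempty := ⟨t1, ⟨le_rfl, ht12⟩, hft1⟩
    have hSbdd : BddAbove (Set.Icc t1 t2 ∩ f ⁻¹' Set.Iic θs) :=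
      BddAbove.mono Set.inter_subset_left bddAbove_Icc
    set s := sSup (Set.Icc t1 t2 ∩ f ⁻¹' Set.Iic θs) with hsdef
    have hsS : s ∈ Set.Icc t1 t2 ∩ f ⁻¹' Set.Iic θs := hSclosed.csSup_mem hSne hSbdd
    have hfs : f s ≤ θs := hsS.2
    have hst2 : s < t2 := lt_of_le_of_ne hsS.1.2 (by intro h; rw [h] at hfs; linarith)
    have hmid : ∀ t, s < t → t ≤ t2 → θs < f t := by
      intro t hst htt2
      by_contra hc
      push_neg at hc
      have hmem : t ∈ Set.Icc t1 t2 ∩ f ⁻¹' Set.Iic θs :=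
        ⟨⟨hsS.1.1.trans hst.le, htt2⟩, hc⟩
      have := le_csSup hSbdd hmem
      linarith
    have hanti : StrictAntiOn f (Set.Icc s t2) := by
      apply strictAntiOn_of_deriv_neg (convex_Icc _ _)
      · exact fun t ht => ((hf' t ((ht1.trans hsS.1.1).trans ht.1)).continuousAt).continuousWithinAt
      · intro t ht
        rw [interior_Icc] at ht
        have ht0 : 0 ≤ t := (ht1.trans hsS.1.1).trans ht.1.le
        rw [(hf' t ht0).deriv]
        have hfmem := hf t ht0
        have hneg : (1 - f t) * β * astar (f t) - δ < 0 := by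
          have := hFanti θs (f t) hθs.1 (hmid t ht.1 ht.2.le) hfmem.2.le
          rw [hFs] at this
          linarith
        exact mul_neg_of_pos_of_neg hfmem.1 hneg
    have := hanti (Set.left_mem_Icc.mpr hst2.le) (Set.right_mem_Icc.mpr hst2.le) hst2
    linarith
  have hbarD : ∀ t1 t2 : ℝ, 0 ≤ t1 → t1 ≤ t2 → θs ≤ f t1 → θs ≤ f t2 := by
    intro t1 t2 ht1 ht12 hft1
    by_contra hcon
    push_neg at hcon
    have hfcOn : ContinuousOn f (Set.Icc t1 t2) := fun t ht =>
      ((hf' t (ht1.trans ht.1)).continuousAt).continuousWithinAt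
    have hSclosed : IsClosed (Set.Icc t1 t2 ∩ f ⁻¹' Set.Ici θs) :=
      hfcOn.preimage_isClosed_of_isClosed isClosed_Icc isClosed_Ici
    have hSne : (Set.Icc t1 t2 ∩ f ⁻¹' Set.Ici θs).Nonempty := ⟨t1, ⟨le_rfl, ht12⟩, hft1⟩
    have hSbdd : BddAbove (Set.Icc t1 t2 ∩ f ⁻¹' Set.Ici θs) :=
      BddAbove.mono Set.inter_subset_left bddAbove_Icc
    set s := sSup (Set.Icc t1 t2 ∩ f ⁻¹' Set.Ici θs) with hsdef
    have hsS : s ∈ Set.Icc t1 t2 ∩ f ⁻¹' Set.Ici θs := hSclosed.csSup_mem hSne hSbdd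
    have hfs : θs ≤ f s := hsS.2
    have hst2 : s < t2 := lt_of_le_of_ne hsS.1.2 (by intro h; rw [h] at hfs; linarith)
    have hmid : ∀ t, s < t → t ≤ t2 → f t < θs := by
      intro t hst htt2
      by_contra hc
      push_neg at hc
      have hmem : t ∈ Set.Icc t1 t2 ∩ f ⁻¹' Set.Ici θs :=
        ⟨⟨hsS.1.1.trans hst.le, htt2⟩, hc⟩
      have := le_csSup hSbdd hmem
      linarith
    have hmono : StrictMonoOn f (Set.Icc s t2) := by
      apply strictMonoOn_of_deriv_pos (convex_Icc _ _)
      · exact fun t ht => ((hf' t ((ht1.trans hsS.1.1).trans ht.1)).continuousAt).continuousWithinAt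
      · intro t ht
        rw [interior_Icc] at ht
        have ht0 : 0 ≤ t := (ht1.trans hsS.1.1).trans ht.1.le
        rw [(hf' t ht0).deriv]
        have hfmem := hf t ht0
        have hpos : 0 < (1 - f t) * β * astar (f t) - δ := by
          have := hFanti (f t) θs hfmem.1 (hmid t ht.1 ht.2.le) hθs.2.le
          rw [hFs] at this
          linarith
        exact mul_pos hfmem.1 hpos
    have := hmono (Set.left_mem_Icc.mpr hst2.le) (Set.right_mem_Icc.mpr hst2.le) hst2
    linarith
  -- continuity and differentiability of `f` on `[0, ∞)`
  have hfcont : ContinuousOn f (Set.Ici 0) := fun t ht =>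
    ((hf' t ht).continuousAt).continuousWithinAt
  have hfdiff : DifferentiableOn ℝ f (interior (Set.Ici (0:ℝ))) := by
    intro t ht
    rw [interior_Ici] at ht
    exact ((hf' t (le_of_lt ht)).differentiableAt).differentiableWithinAt
  rcases le_total (f 0) θs with hcase | hcase
  · -- ### Case: start below θs, `f` increases to `θs`
    have hle : ∀ t : ℝ, 0 ≤ t → f t ≤ θs := fun t ht => hbarU 0 t le_rfl ht hcase
    have hmono : MonotoneOn f (Set.Ici 0) := by
      apply monotoneOn_of_deriv_nonneg (convex_Ici 0) hfcont hfdiff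
      intro t ht
      rw [interior_Ici] at ht
      rw [(hf' t ht.le).deriv]
      have hfmem := hf t ht.le
      exact mul_nonneg hfmem.1.le (hVnn (f t) hfmem.1 (hle t ht.le))
    have hgmon : Monotone (fun t : ℝ => f (max t 0)) := fun x y hxy =>
      hmono (Set.mem_Ici.mpr (le_max_right x 0)) (Set.mem_Ici.mpr (le_max_right y 0))
        (max_le_max hxy le_rfl)
    have hbdd : BddAbove (Set.range fun t : ℝ => f (max t 0)) :=
      ⟨θs, by rintro x ⟨t, rfl⟩; exact hle _ (le_max_right t 0)⟩
    have htend := tendsto_atTop_ciSup hgmon hbdd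
    have heqev : (fun t : ℝ => f (max t 0)) =ᶠ[Filter.atTop] f := by
      filter_upwards [Filter.eventually_ge_atTop (0 : ℝ)] with t ht
      rw [max_eq_left ht]
    have htendf : Filter.Tendsto f Filter.atTop (nhds (⨆ t : ℝ, f (max t 0))) :=
      htend.congr' heqev
    have hLle : (⨆ t : ℝ, f (max t 0)) ≤ θs :=
      ciSup_le fun t => hle _ (le_max_right t 0)
    have hLeq : (⨆ t : ℝ, f (max t 0)) = θs := by
      by_contra hne
      set L := ⨆ t : ℝ, f (max t 0) with hLdef
      have hLlt : L < θs := lt_of_le_of_ne hLle hne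
      have hfleL : ∀ t : ℝ, 0 ≤ t → f t ≤ L := by
        intro t ht
        have : f (max t 0) ≤ L := le_ciSup hbdd t
        rwa [max_eq_left ht] at this
      have hf00 : 0 < f 0 := (hf 0 le_rfl).1
      have hL0 : 0 < L := lt_of_lt_of_le hf00 (hfleL 0 le_rfl)
      have hL1 : L ≤ 1 := hLle.trans hθs.2.le
      have hVL : 0 < (1 - L) * β * astar L - δ := by
        have := hFanti L θs hL0 hLlt hθs.2.le
        rw [hFs] at this
        linarith
      set c : ℝ := f 0 * ((1 - L) * β * astar L - δ) with hcdef
      have hcpos : 0 < c := mul_pos hf00 hVL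
      have hderge : ∀ t : ℝ, 0 ≤ t →
          c ≤ f t * ((1 - f t) * β * astar (f t) - δ) := by
        intro t ht
        have hfmem := hf t ht
        have hfge : f 0 ≤ f t := hmono (Set.mem_Ici.mpr le_rfl) (Set.mem_Ici.mpr ht) ht
        have hVge : (1 - L) * β * astar L - δ ≤ (1 - f t) * β * astar (f t) - δ := by
          rcases eq_or_lt_of_le (hfleL t ht) with he | hl
          · rw [he]
          · have := hFanti (f t) L hfmem.1 hl hL1
            linarith
        calc c = f 0 * ((1 - L) * β * astar L - δ) := hcdef
          _ ≤ f t * ((1 - L) * β * astar L - δ) :=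
              mul_le_mul_of_nonneg_right hfge hVL.le
          _ ≤ f t * ((1 - f t) * β * astar (f t) - δ) :=
              mul_le_mul_of_nonneg_left hVge hfmem.1.le
      -- linear growth contradiction
      have hφmono : MonotoneOn (fun t : ℝ => f t - c * t) (Set.Ici 0) := by
        apply monotoneOn_of_deriv_nonneg (convex_Ici 0)
        · exact hfcont.sub (continuous_const.mul continuous_id).continuousOn
        · intro t ht
          rw [interior_Ici] at ht
          exact (((hf' t (le_of_lt ht)).sub
            ((hasDerivAt_id t).const_mul c)).differentiableAt).differentiableWithinAt
        · intro t ht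
          rw [interior_Ici] at ht
          have hd : HasDerivAt (fun y : ℝ => f y - c * y)
              (f t * ((1 - f t) * β * astar (f t) - δ) - c * 1) t :=
            (hf' t (le_of_lt ht)).sub ((hasDerivAt_id t).const_mul c)
          rw [hd.deriv]
          have := hderge t (le_of_lt ht)
          linarith
      have hT : (0 : ℝ) ≤ 1 / c := by positivity
      have hgrow := hφmono (Set.mem_Ici.mpr le_rfl) (Set.mem_Ici.mpr hT) hT
      simp only at hgrow
      have hcc : c * (1 / c) = 1 := mul_one_div_cancel hcpos.ne'
      have hf1 : f (1 / c) < 1 := (hf _ hT).2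
      rw [hcc] at hgrow
      linarith [hf00]
    rw [hLeq] at htendf
    exact htendf
  · -- ### Case: start above θs, `f` decreases to `θs`
    have hge : ∀ t : ℝ, 0 ≤ t → θs ≤ f t := fun t ht => hbarD 0 t le_rfl ht hcase
    have hmono : AntitoneOn f (Set.Ici 0) := by
      apply antitoneOn_of_deriv_nonpos (convex_Ici 0) hfcont hfdiff
      intro t ht
      rw [interior_Ici] at ht
      rw [(hf' t ht.le).deriv]
      have hfmem := hf t ht.le
      exact mul_nonpos_of_nonneg_of_nonpos hfmem.1.le
        (hVnp (f t) (hge t ht.le) hfmem.2.le)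
    have hgmon : Antitone (fun t : ℝ => f (max t 0)) := fun x y hxy =>
      hmono (Set.mem_Ici.mpr (le_max_right x 0)) (Set.mem_Ici.mpr (le_max_right y 0))
        (max_le_max hxy le_rfl)
    have hbdd : BddBelow (Set.range fun t : ℝ => f (max t 0)) :=
      ⟨θs, by rintro x ⟨t, rfl⟩; exact hge _ (le_max_right t 0)⟩
    have htend := tendsto_atTop_ciInf hgmon hbdd
    have heqev : (fun t : ℝ => f (max t 0)) =ᶠ[Filter.atTop] f := by
      filter_upwards [Filter.eventually_ge_atTop (0 : ℝ)] with t ht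
      rw [max_eq_left ht]
    have htendf : Filter.Tendsto f Filter.atTop (nhds (⨅ t : ℝ, f (max t 0))) :=
      htend.congr' heqev
    have hLge : θs ≤ (⨅ t : ℝ, f (max t 0)) :=
      le_ciInf fun t => hge _ (le_max_right t 0)
    have hLeq : (⨅ t : ℝ, f (max t 0)) = θs := by
      by_contra hne
      set L := ⨅ t : ℝ, f (max t 0) with hLdef
      have hLgt : θs < L := lt_of_le_of_ne hLge (Ne.symm hne)
      have hfgeL : ∀ t : ℝ, 0 ≤ t → L ≤ f t := by
        intro t ht
        have : L ≤ f (max t 0) := ciInf_le hbdd t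
        rwa [max_eq_left ht] at this
      have hf01 : f 0 < 1 := (hf 0 le_rfl).2
      have hL1 : L ≤ 1 := by
        have : L ≤ f 0 := hfgeL 0 le_rfl
        linarith
      have hL0 : 0 < L := lt_trans hθs.1 hLgt
      have hVL : (1 - L) * β * astar L - δ < 0 := by
        have := hFanti θs L hθs.1 hLgt hL1
        rw [hFs] at this
        linarith
      set c : ℝ := L * ((1 - L) * β * astar L - δ) with hcdef
      have hcneg : c < 0 := mul_neg_of_pos_of_neg hL0 hVL
      have hderle : ∀ t : ℝ, 0 ≤ t →
          f t * ((1 - f t) * β * astar (f t) - δ) ≤ c := by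
        intro t ht
        have hfmem := hf t ht
        have hfge : L ≤ f t := hfgeL t ht
        have hVle : (1 - f t) * β * astar (f t) - δ ≤ (1 - L) * β * astar L - δ := by
          rcases eq_or_lt_of_le hfge with he | hl
          · rw [← he]
          · have := hFanti L (f t) hL0 hl hfmem.2.le
            linarith
        calc f t * ((1 - f t) * β * astar (f t) - δ)
            ≤ f t * ((1 - L) * β * astar L - δ) :=
              mul_le_mul_of_nonneg_left hVle hfmem.1.le
          _ ≤ L * ((1 - L) * β * astar L - δ) :=
              mul_le_mul_of_nonpos_right hfge hVL.le
          _ = c := hcdef.symm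
      have hφanti : AntitoneOn (fun t : ℝ => f t - c * t) (Set.Ici 0) := by
        apply antitoneOn_of_deriv_nonpos (convex_Ici 0)
        · exact hfcont.sub (continuous_const.mul continuous_id).continuousOn
        · intro t ht
          rw [interior_Ici] at ht
          exact (((hf' t (le_of_lt ht)).sub
            ((hasDerivAt_id t).const_mul c)).differentiableAt).differentiableWithinAt
        · intro t ht
          rw [interior_Ici] at ht
          have hd : HasDerivAt (fun y : ℝ => f y - c * y)
              (f t * ((1 - f t) * β * astar (f t) - δ) - c * 1) t :=
            (hf' t (le_of_lt ht)).sub ((hasDerivAt_id t).const_mul c)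
          rw [hd.deriv]
          have := hderle t (le_of_lt ht)
          linarith
      have hT : (0 : ℝ) ≤ 1 / (-c) :=
        (div_pos one_pos (by linarith : (0:ℝ) < -c)).le
      have hgrow := hφanti (Set.mem_Ici.mpr le_rfl) (Set.mem_Ici.mpr hT) hT
      simp only at hgrow
      have hcc : c * (1 / (-c)) = -1 := by
        rw [mul_one_div, div_neg, div_self hcneg.ne]
      have hfpos' : 0 < f (1 / (-c)) := (hf _ hT).1
      rw [hcc] at hgrow
      linarith [hf01]
    rw [hLeq] at htendf
    exact htendf
end

section
/- Let β > 0, δ > 0, ρ > 0, set a_c = δ/β and a† = (δ + √(δ² + ρδ))/β, and let u : ℝ → ℝ be twice continuously differentiable with u(0) = 0, u'(x) > 0 for x ∈ [0, W), u'(W) = 0, u''(x) < 0 for x ∈ [0, W], and W > a†. Let a^CE ∈ (a_c, W) be the unique solution of u(a)/u'(a) − a = (ρ + δ)/(β − δ/a), define the equilibrium efficiency E^CE = (δ/(β·a^CE))·u(a^CE), the social optimum E^OPT = u(a_c), the price of anarchy PoA = E^OPT/E^CE, and κ = (a†·u(a_c))/(a_c·u(a†)). Then: (i) if u'(a†) <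 u(a†)/(2a† + ρ/β), then a^CE < a† and PoA < κ; (ii) if u'(a†) > u(a†)/(2a† + ρ/β), then a^CE > a† and PoA > κ; (iii) if u'(a†) = u(a†)/(2a† + ρ/β), then a^CE = a† and PoA = κ. -/
set_option maxHeartbeats 1000000

/-- **Price of anarchy bounds.**
With `a_c = δ/β`, `a† = (δ + √(δ² + ρδ))/β`, `a^CE` the unique conjectural
equilibrium in `(a_c, W)`, `E^CE = (δ/(β·a^CE))·u(a^CE)`, `E^OPT = u(a_c)`,
`PoA = E^OPT/E^CE` and `κ = a†·u(a_c)/(a_c·u(a†))`: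
(i) if `u'(a†) < u(a†)/(2a† + ρ/β)` then `a^CE < a†` and `PoA < κ`;
(ii) if `u'(a†) > u(a†)/(2a† + ρ/β)` then `a^CE > a†` and `PoA > κ`;
(iii) if `u'(a†) = u(a†)/(2a† + ρ/β)` then `a^CE = a†` and `PoA = κ`. -/
theorem price_of_anarchy_bounds
    (β δ ρ W : ℝ) (hβ : 0 < β) (hδ : 0 < δ) (hρ : 0 < ρ)
    (hW : (δ + Real.sqrt (δ ^ 2 + ρ * δ)) / β < W)
    (u : ℝ → ℝ) (hu : ContDiff ℝ 2 u) (hu0 : u 0 = 0)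
    (hu' : ∀ x : ℝ, 0 ≤ x → x < W → 0 < deriv u x) (huW : deriv u W = 0)
    (hu'' : ∀ x : ℝ, 0 ≤ x → x ≤ W → deriv (deriv u) x < 0)
    (aCE : ℝ) (haCE : aCE ∈ Set.Ioo (δ / β) W)
    (heqCE : u aCE / deriv u aCE - aCE = (ρ + δ) / (β - δ / aCE))
    (huniq : ∀ a ∈ Set.Ioo (δ / β) W,
      u a / deriv u a - a = (ρ + δ) / (β - δ / a) → a = aCE) :
    (deriv u ((δ + Real.sqrt (δ ^ 2 + ρ * δ)) / β) <
        u ((δ + Real.sqrt (δ ^ 2 + ρ * δ)) / β) /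
          (2 * ((δ + Real.sqrt (δ ^ 2 + ρ * δ)) / β) + ρ / β) →
      aCE < (δ + Real.sqrt (δ ^ 2 + ρ * δ)) / β ∧
      u (δ / β) / ((δ / (β * aCE)) * u aCE) <
        ((δ + Real.sqrt (δ ^ 2 + ρ * δ)) / β * u (δ / β)) /
          (δ / β * u ((δ + Real.sqrt (δ ^ 2 + ρ * δ)) / β))) ∧
    (u ((δ + Real.sqrt (δ ^ 2 + ρ * δ)) / β) /
          (2 * ((δ + Real.sqrt (δ ^ 2 + ρ * δ)) / β) + ρ / β) <
        deriv u ((δ + Real.sqrt (δ ^ 2 + ρ * δ)) / β) →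
      (δ + Real.sqrt (δ ^ 2 + ρ * δ)) / β < aCE ∧
      ((δ + Real.sqrt (δ ^ 2 + ρ * δ)) / β * u (δ / β)) /
          (δ / β * u ((δ + Real.sqrt (δ ^ 2 + ρ * δ)) / β)) <
        u (δ / β) / ((δ / (β * aCE)) * u aCE)) ∧
    (deriv u ((δ + Real.sqrt (δ ^ 2 + ρ * δ)) / β) =
        u ((δ + Real.sqrt (δ ^ 2 + ρ * δ)) / β) /
          (2 * ((δ + Real.sqrt (δ ^ 2 + ρ * δ)) / β) + ρ / β) →
      aCE = (δ + Real.sqrt (δ ^ 2 + ρ * δ)) / β ∧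
      u (δ / β) / ((δ / (β * aCE)) * u aCE) =
        ((δ + Real.sqrt (δ ^ 2 + ρ * δ)) / β * u (δ / β)) /
          (δ / β * u ((δ + Real.sqrt (δ ^ 2 + ρ * δ)) / β))) := by
  have hsq : Real.sqrt (δ ^ 2 + ρ * δ) ^ 2 = δ ^ 2 + ρ * δ :=
    Real.sq_sqrt (by positivity)
  have hs : 0 < Real.sqrt (δ ^ 2 + ρ * δ) := Real.sqrt_pos.2 (by positivity)
  set s := Real.sqrt (δ ^ 2 + ρ * δ) with hs_def
  set ac := δ / β with hac_def
  set T := (δ + s) / β with hT_def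
  have hac_pos : 0 < ac := div_pos hδ hβ
  have hacT : ac < T := by
    rw [hac_def, hT_def, div_lt_div_iff₀ hβ hβ]; nlinarith
  have hT_pos : 0 < T := hac_pos.trans hacT
  have hTW : T < W := hW
  have hW_pos : 0 < W := hT_pos.trans hTW
  have hβT : β * T = δ + s := by rw [hT_def]; field_simp
  -- basic facts about u
  have hu_diff : Differentiable ℝ u := hu.differentiable (by norm_num)
  have hu_cont : Continuous u := hu_diff.continuous
  have hu'_cont : Continuous (deriv u) := hu.continuous_deriv (by norm_num)
  have huMono : StrictMonoOn u (Set.Icc 0 W) := by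
    apply strictMonoOn_of_deriv_pos (convex_Icc 0 W) hu_cont.continuousOn
    intro x hx
    rw [interior_Icc] at hx
    exact hu' x hx.1.le hx.2
  have hu'Anti : StrictAntiOn (deriv u) (Set.Icc 0 W) := by
    apply strictAntiOn_of_deriv_neg (convex_Icc 0 W) hu'_cont.continuousOn
    intro x hx
    rw [interior_Icc] at hx
    exact hu'' x hx.1.le hx.2.le
  have hu_pos : ∀ x : ℝ, 0 < x → x ≤ W → 0 < u x := by
    intro x hx hxW
    have := huMono (Set.mem_Icc.2 ⟨le_refl 0, hW_pos.le⟩)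
      (Set.mem_Icc.2 ⟨hx.le, hxW⟩) hx
    rwa [hu0] at this
  -- strict concavity consequence: x * u'(x) < u(x) on (0, W]
  have hkey : ∀ x : ℝ, 0 < x → x ≤ W → x * deriv u x < u x := by
    intro x hx hxW
    obtain ⟨c, hc, hderiv⟩ := exists_deriv_eq_slope u hx hu_cont.continuousOn
      hu_diff.differentiableOn
    have hcx : deriv u x < deriv u c :=
      hu'Anti (Set.mem_Icc.2 ⟨hc.1.le, hc.2.le.trans hxW⟩)
        (Set.mem_Icc.2 ⟨hx.le, hxW⟩) hc.2
    rw [hu0, sub_zero, sub_zero] at hderiv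
    have hcx2 : deriv u c * x = u x := by
      rw [hderiv]; field_simp
    nlinarith
  -- ratio monotonicity: x / u x is strictly increasing on (0, W]
  have hratio : ∀ x y : ℝ, 0 < x → x < y → y ≤ W → x / u x < y / u y := by
    intro x y hx hxy hyW
    have hy : 0 < y := hx.trans hxy
    have hcl : ContinuousOn (fun a : ℝ => u a / a) (Set.Icc x y) :=
      ContinuousOn.div hu_cont.continuousOn continuousOn_id
        (fun a ha => (hx.trans_le ha.1).ne')
    have hg : StrictAntiOn (fun a => u a / a) (Set.Icc x y) := by
      apply strictAntiOn_of_deriv_neg (convex_Icc x y) hcl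
      intro a ha
      rw [interior_Icc] at ha
      have ha0 : 0 < a := hx.trans ha.1
      have haW : a ≤ W := ha.2.le.trans hyW
      have hda : HasDerivAt (fun a => u a / a)
          ((deriv u a * a - u a * 1) / a ^ 2) a :=
        ((hu_diff a).hasDerivAt).div (hasDerivAt_id a) ha0.ne'
      rw [hda.deriv]
      have h1 := hkey a ha0 haW
      have h2 : deriv u a * a - u a * 1 < 0 := by nlinarith
      exact div_neg_of_neg_of_pos h2 (by positivity)
    have h2 := hg (Set.left_mem_Icc.2 hxy.le) (Set.right_mem_Icc.2 hxy.le) hxy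
    simp only at h2
    have hux := hu_pos x hx (hxy.le.trans hyW)
    have huy := hu_pos y hy hyW
    rw [div_lt_div_iff₀ hy hx] at h2
    rw [div_lt_div_iff₀ hux huy]
    nlinarith
  -- the identity (ρ+δ)/(β - δ/T) = T + ρ/β
  have hdenT : 0 < β - δ / T := by
    have h : δ / T < β := by rw [div_lt_iff₀ hT_pos]; nlinarith
    linarith
  have hgT : (ρ + δ) / (β - δ / T) = T + ρ / β := by
    rw [div_eq_iff hdenT.ne']
    have hT0 : T ≠ 0 := hT_pos.ne'
    field_simp
    nlinarith [hsq, hβT]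
  -- the function F
  set F : ℝ → ℝ := fun a => u a / deriv u a - a - (ρ + δ) / (β - δ / a) with hF_def
  have hden_pos : ∀ a : ℝ, ac < a → 0 < β - δ / a := by
    intro a ha
    have ha0 : 0 < a := hac_pos.trans ha
    have h : δ / a < β := by
      rw [div_lt_iff₀ ha0]
      have h2 : δ / β < a := ha
      rw [div_lt_iff₀ hβ] at h2
      nlinarith
    linarith
  have hFcont : ∀ l r : ℝ, ac < l → r < W → ContinuousOn F (Set.Icc l r) := by
    intro l r hl hr
    have hl0 : 0 < l := hac_pos.trans hl
    apply ContinuousOn.sub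
    apply ContinuousOn.sub
    · exact hu_cont.continuousOn.div hu'_cont.continuousOn
        (fun a ha => (hu' a (hl0.le.trans ha.1) (lt_of_le_of_lt ha.2 hr)).ne')
    · exact continuousOn_id
    · exact continuousOn_const.div
        (continuousOn_const.sub (continuousOn_const.div continuousOn_id
          (fun a ha => (hl0.trans_le ha.1).ne')))
        (fun a ha => (hden_pos a (hl.trans_le ha.1)).ne')
  have hroot : ∀ a : ℝ, ac < a → a < W → F a = 0 → a = aCE := by
    intro a ha haW hFa
    apply huniq a (Set.mem_Ioo.2 ⟨ha, haW⟩)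
    rw [hF_def] at hFa
    simp only at hFa
    linarith
  have hu'T : 0 < deriv u T := hu' T hT_pos.le hTW
  have huT : 0 < u T := hu_pos T hT_pos hTW.le
  have h2T : 0 < 2 * T + ρ / β := by positivity
  have hFT_eq : F T = u T / deriv u T - (2 * T + ρ / β) := by
    rw [hF_def]; simp only; rw [hgT]; ring
  -- a point l slightly above ac where F l < 0
  have hl_ex : ∃ l : ℝ, ac < l ∧ l < T ∧ F l < 0 := by
    have hM_pos : 0 < u T / deriv u T := div_pos huT hu'T
    obtain ⟨M, hM_def⟩ : ∃ M : ℝ, M = u T / deriv u T := ⟨_, rfl⟩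
    rw [← hM_def] at hM_pos
    obtain ⟨ε, hε_pos, hεle1, hεle2⟩ :
        ∃ ε : ℝ, 0 < ε ∧ ε ≤ (T - ac) / 2 ∧ ε ≤ (ρ + δ) * ac / (β * (M + 1)) :=
      ⟨min ((T - ac) / 2) ((ρ + δ) * ac / (β * (M + 1))),
        lt_min (by linarith) (by positivity), min_le_left _ _, min_le_right _ _⟩
    refine ⟨ac + ε, by linarith, by linarith, ?_⟩
    have hl0 : 0 < ac + ε := by positivity
    have hlT : ac + ε < T := by linarith
    have hlW : ac + ε < W := hlT.trans hTW
    have hu'l : 0 < deriv u (ac + ε) := hu' _ hl0.le hlW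
    have h1 : u (ac + ε) < u T :=
      huMono (Set.mem_Icc.2 ⟨hl0.le, hlW.le⟩)
        (Set.mem_Icc.2 ⟨hT_pos.le, hTW.le⟩) hlT
    have h2 : deriv u T < deriv u (ac + ε) :=
      hu'Anti (Set.mem_Icc.2 ⟨hl0.le, hlW.le⟩)
        (Set.mem_Icc.2 ⟨hT_pos.le, hTW.le⟩) hlT
    have hMl : u (ac + ε) / deriv u (ac + ε) < M := by
      rw [hM_def, div_lt_div_iff₀ hu'l hu'T]
      nlinarith [hu_pos (ac + ε) hl0 hlW.le]
    have hden_l : β - δ / (ac + ε) = β * ε / (ac + ε) := by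
      rw [hac_def] at hl0 ⊢
      field_simp
      ring
    have hterm : M + 1 < (ρ + δ) / (β - δ / (ac + ε)) := by
      rw [hden_l, lt_div_iff₀ (by positivity), ← mul_div_assoc,
        div_lt_iff₀ hl0]
      have hkey2 : ε * (β * (M + 1)) ≤ (ρ + δ) * ac :=
        (le_div_iff₀ (by positivity)).mp hεle2
      nlinarith
    rw [hF_def]
    simp only
    linarith
  -- a point r slightly below W where F r > 0
  have hr_ex : ∃ r : ℝ, T < r ∧ r < W ∧ 0 < F r := by
    set K := W + (ρ + δ) / (β - δ / T) + 1 with hK_def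
    have hgT_pos : 0 < (ρ + δ) / (β - δ / T) := div_pos (by linarith) hdenT
    have hK_pos : 0 < K := by rw [hK_def]; linarith
    set ε₀ := u T / K with hε₀_def
    have hε₀_pos : 0 < ε₀ := div_pos huT hK_pos
    have hopen : IsOpen {x : ℝ | deriv u x < ε₀} :=
      isOpen_lt hu'_cont continuous_const
    have hWmem : W ∈ {x : ℝ | deriv u x < ε₀} := by
      simp only [Set.mem_setOf_eq, huW]; exact hε₀_pos
    obtain ⟨η, hη_pos, hball⟩ := Metric.isOpen_iff.mp hopen W hWmem
    set r := max ((T + W) / 2) (W - η / 2) with hr_def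
    have hTr : T < r := lt_of_lt_of_le (by linarith) (le_max_left _ _)
    have hrW : r < W := by
      rw [hr_def]
      apply max_lt (by linarith) (by linarith)
    have hr0 : 0 < r := hT_pos.trans hTr
    have hrball : r ∈ Metric.ball W η := by
      rw [Real.ball_eq_Ioo]
      constructor
      · have : W - η / 2 ≤ r := le_max_right _ _
        linarith
      · linarith
    have hu'r_small : deriv u r < ε₀ := hball hrball
    have hu'r : 0 < deriv u r := hu' r hr0.le hrW
    have hur : u T < u r :=
      huMono (Set.mem_Icc.2 ⟨hT_pos.le, hTW.le⟩)
        (Set.mem_Icc.2 ⟨hr0.le, hrW.le⟩) hTr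
    have hbig : K < u r / deriv u r := by
      rw [lt_div_iff₀ hu'r]
      have h3 : K * deriv u r < K * ε₀ := by
        exact mul_lt_mul_of_pos_left hu'r_small hK_pos
      have h4 : K * ε₀ = u T := by
        rw [hε₀_def]; field_simp
      nlinarith
    have hgr : (ρ + δ) / (β - δ / r) ≤ (ρ + δ) / (β - δ / T) := by
      have hdr : 0 < β - δ / r := hden_pos r (hacT.trans hTr)
      rw [div_le_div_iff₀ hdr hdenT]
      have h5 : δ / r < δ / T := div_lt_div_of_pos_left hδ hT_pos hTr
      nlinarith
    refine ⟨r, hTr, hrW, ?_⟩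
    rw [hF_def]
    simp only
    rw [hK_def] at hbig
    linarith
  refine ⟨?_, ?_, ?_⟩
  -- Case (i)
  · intro h
    have hFT : 0 < F T := by
      rw [hFT_eq]
      rw [lt_div_iff₀ h2T] at h
      rw [sub_pos, lt_div_iff₀ hu'T]
      linarith [mul_comm (deriv u T) (2 * T + ρ / β)]
    have haT : aCE < T := by
      by_contra hcon
      push_neg at hcon
      obtain ⟨l, hl1, hl2, hl3⟩ := hl_ex
      obtain ⟨c, hc, hFc⟩ :=
        intermediate_value_Icc hl2.le (hFcont l T hl1 hTW)
          (Set.mem_Icc.2 ⟨hl3.le, hFT.le⟩)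
      have hcT : c < T := lt_of_le_of_ne hc.2 (by
        intro hcT; rw [hcT] at hFc; linarith)
      have hcac : ac < c := hl1.trans_le hc.1
      have := hroot c hcac (hcT.trans hTW) hFc
      linarith
    refine ⟨haT, ?_⟩
    have haCE0 : 0 < aCE := hac_pos.trans haCE.1
    have huaCE : 0 < u aCE := hu_pos aCE haCE0 haCE.2.le
    have huac : 0 < u ac := hu_pos ac hac_pos (hacT.le.trans hTW.le)
    have hr := hratio aCE T haCE0 haT hTW.le
    have e1 : u ac / (δ / (β * aCE) * u aCE) = aCE / u aCE * (u ac / ac) := by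
      rw [hac_def]; field_simp
    have e2 : T * u ac / (ac * u T) = T / u T * (u ac / ac) := by
      field_simp
    rw [e1, e2]
    exact mul_lt_mul_of_pos_right hr (by positivity)
  -- Case (ii)
  · intro h
    have hFT : F T < 0 := by
      rw [hFT_eq]
      rw [div_lt_iff₀ h2T] at h
      rw [sub_neg, div_lt_iff₀ hu'T]
      linarith [mul_comm (u T) (2 * T + ρ / β)]
    have haT : T < aCE := by
      by_contra hcon
      push_neg at hcon
      obtain ⟨r, hr1, hr2, hr3⟩ := hr_ex
      obtain ⟨c, hc, hFc⟩ :=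
        intermediate_value_Icc hr1.le (hFcont T r hacT hr2)
          (Set.mem_Icc.2 ⟨hFT.le, hr3.le⟩)
      have hcT : T < c := lt_of_le_of_ne hc.1 (by
        intro hEq; rw [← hEq] at hFc; linarith)
      have := hroot c (hacT.trans hcT) (hc.2.trans_lt hr2) hFc
      linarith
    refine ⟨haT, ?_⟩
    have haCE0 : 0 < aCE := hac_pos.trans haCE.1
    have huaCE : 0 < u aCE := hu_pos aCE haCE0 haCE.2.le
    have huac : 0 < u ac := hu_pos ac hac_pos (hacT.le.trans hTW.le)
    have hr := hratio T aCE hT_pos haT haCE.2.le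
    have e1 : u ac / (δ / (β * aCE) * u aCE) = aCE / u aCE * (u ac / ac) := by
      rw [hac_def]; field_simp
    have e2 : T * u ac / (ac * u T) = T / u T * (u ac / ac) := by
      field_simp
    rw [e1, e2]
    exact mul_lt_mul_of_pos_right hr (by positivity)
  -- Case (iii)
  · intro h
    have hFT : F T = 0 := by
      rw [hFT_eq]
      rw [eq_div_iff h2T.ne'] at h
      rw [sub_eq_zero, div_eq_iff hu'T.ne']
      linarith [mul_comm (deriv u T) (2 * T + ρ / β)]
    have haT : aCE = T := (hroot T hacT hTW hFT).symm
    refine ⟨haT, ?_⟩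
    rw [haT]
    have huac : 0 < u ac := hu_pos ac hac_pos (hacT.le.trans hTW.le)
    rw [hac_def]
    field_simp
end

section
/- Let K be a finite nonempty index set, β > 0, and for each k ∈ K let w_k > 0 with ∑_{k∈K} w_k = 1, δ_k > 0, and a_k ≥ 0. Then: (i) if β·∑_{k∈K} w_k·a_k/δ_k > 1, there exists a unique θ ∈ (0, 1) satisfying ∑_{k∈K} w_k·(β·a_k/δ_k)/(θ·β·a_k/δ_k + 1) = 1; (ii) if β·∑_{k∈K} w_k·a_k/δ_k ≤ 1, then no θ ∈ (0, 1) satisfies this equation, i.e., the only stationary infection level is θ = 0. -/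
/-- **Stationary infection level with heterogeneous agents.**
(i) If `β·∑ₖ wₖ·aₖ/δₖ > 1`, there is a unique `θ ∈ (0, 1)` satisfying
`∑ₖ wₖ·(β·aₖ/δₖ)/(θ·β·aₖ/δₖ + 1) = 1`.
(ii) If `β·∑ₖ wₖ·aₖ/δₖ ≤ 1`, no `θ ∈ (0, 1)` satisfies this equation; the only
stationary infection level is `θ = 0`. -/
theorem heterogeneous_stationary_infection
    (K : Type*) [Fintype K] [Nonempty K] (β : ℝ) (hβ : 0 < β)
    (w δ a : K → ℝ)
    (hw : ∀ k, 0 < w k) (hsum : ∑ k, w k = 1)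
    (hδ : ∀ k, 0 < δ k) (ha : ∀ k, 0 ≤ a k) :
    (1 < β * ∑ k, w k * a k / δ k →
      ∃! θ : ℝ, θ ∈ Set.Ioo (0 : ℝ) 1 ∧
        ∑ k, w k * ((β * a k / δ k) / (θ * (β * a k / δ k) + 1)) = 1) ∧
    (β * ∑ k, w k * a k / δ k ≤ 1 →
      ∀ θ ∈ Set.Ioo (0 : ℝ) 1,
        ∑ k, w k * ((β * a k / δ k) / (θ * (β * a k / δ k) + 1)) ≠ 1) := by
  classical
  have hc : ∀ k, 0 ≤ β * a k / δ k := fun k =>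
    div_nonneg (mul_nonneg hβ.le (ha k)) (hδ k).le
  set F : ℝ → ℝ :=
    fun θ => ∑ k, w k * ((β * a k / δ k) / (θ * (β * a k / δ k) + 1)) with hFdef
  have hden : ∀ (θ : ℝ), 0 ≤ θ → ∀ k, 0 < θ * (β * a k / δ k) + 1 := by
    intro θ hθ k
    nlinarith [mul_nonneg hθ (hc k)]
  have hF0 : F 0 = β * ∑ k, w k * a k / δ k := by
    simp only [hFdef, zero_mul, zero_add, div_one, Finset.mul_sum]
    exact Finset.sum_congr rfl fun k _ => by ring
  -- strict antitonicity when some coefficient is positive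
  have hanti : ∀ θ1 θ2 : ℝ, 0 ≤ θ1 → θ1 < θ2 → (∃ k, 0 < β * a k / δ k) →
      F θ2 < F θ1 := by
    rintro θ1 θ2 h1 h12 ⟨k0, hk0⟩
    apply Finset.sum_lt_sum
    · intro k _
      have hd1 : 0 < θ1 * (β * a k / δ k) + 1 := hden θ1 h1 k
      have hd2 : 0 < θ2 * (β * a k / δ k) + 1 := hden θ2 (h1.trans h12.le) k
      apply mul_le_mul_of_nonneg_left _ (hw k).le
      rcases eq_or_lt_of_le (hc k) with h | h
      · simp [← h]
      · apply div_le_div_of_nonneg_left (hc k) hd1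
        nlinarith
    · refine ⟨k0, Finset.mem_univ k0, ?_⟩
      have hd1 : 0 < θ1 * (β * a k0 / δ k0) + 1 := hden θ1 h1 k0
      have hd2 : 0 < θ2 * (β * a k0 / δ k0) + 1 := hden θ2 (h1.trans h12.le) k0
      apply mul_lt_mul_of_pos_left _ (hw k0)
      apply div_lt_div_of_pos_left hk0 hd1
      nlinarith
  have hcont : ContinuousOn F (Set.Icc 0 1) := by
    apply continuousOn_finset_sum
    intro k _
    apply ContinuousOn.mul continuousOn_const
    apply ContinuousOn.div continuousOn_const
    · exact ((continuousOn_id.mul continuousOn_const).add continuousOn_const)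
    · intro x hx
      exact (hden x hx.1 k).ne'
  have hF1 : F 1 < 1 := by
    have step : F 1 < ∑ k, w k := by
      apply Finset.sum_lt_sum_of_nonempty Finset.univ_nonempty
      intro k _
      have hd : 0 < 1 * (β * a k / δ k) + 1 := hden 1 zero_le_one k
      have h1 : (β * a k / δ k) / (1 * (β * a k / δ k) + 1) < 1 := by
        rw [div_lt_one hd]; nlinarith
      calc w k * ((β * a k / δ k) / (1 * (β * a k / δ k) + 1))
          < w k * 1 := mul_lt_mul_of_pos_left h1 (hw k)
        _ = w k := mul_one _
    rw [hsum] at step; exact step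
  constructor
  · intro hgt
    rw [← hF0] at hgt
    have hex : ∃ k, 0 < β * a k / δ k := by
      by_contra h
      push_neg at h
      have : F 0 = 0 := by
        rw [hF0]
        have : ∀ k, w k * a k / δ k = 0 := by
          intro k
          have hak : a k = 0 := by
            by_contra hne
            have hpos : 0 < a k := (ha k).lt_of_ne (Ne.symm hne)
            have : 0 < β * a k / δ k := div_pos (mul_pos hβ hpos) (hδ k)
            linarith [h k]
          simp [mul_div_assoc, hak]
        simp [this]
      linarith [hgt, this]
    -- IVT
    have h1mem : (1 : ℝ) ∈ Set.Icc (F 1) (F 0) := ⟨hF1.le, hgt.le⟩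
    obtain ⟨θ, hθmem, hθeq⟩ := intermediate_value_Icc' zero_le_one hcont h1mem
    have hθ0 : θ ≠ 0 := by rintro rfl; linarith [hgt, hθeq]
    have hθ1 : θ ≠ 1 := by rintro rfl; linarith [hF1, hθeq]
    refine ⟨θ, ⟨⟨lt_of_le_of_ne hθmem.1 (Ne.symm hθ0),
      lt_of_le_of_ne hθmem.2 hθ1⟩, hθeq⟩, ?_⟩
    rintro θ' ⟨hθ'mem, hθ'eq0⟩
    have hθ'eq : F θ' = 1 := hθ'eq0
    by_contra hne
    rcases lt_or_gt_of_ne hne with h | h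
    · have := hanti θ' θ hθ'mem.1.le (lt_of_le_of_ne (le_of_lt h) hne) hex
      rw [hθeq, hθ'eq] at this; exact lt_irrefl 1 this
    · have := hanti θ θ' hθmem.1 h hex
      rw [hθeq, hθ'eq] at this; exact lt_irrefl 1 this
  · intro hle θ hθ heq0
    have heq : F θ = 1 := heq0
    by_cases hex : ∃ k, 0 < β * a k / δ k
    · have := hanti 0 θ le_rfl hθ.1 hex
      rw [hF0] at this
      rw [heq] at this
      linarith
    · push_neg at hex
      have hz : ∀ k, β * a k / δ k = 0 := fun k => le_antisymm (hex k) (hc k)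
      have : F θ = 0 := by
        rw [hFdef]
        apply Finset.sum_eq_zero
        intro k _
        rw [hz k]
        simp
      rw [heq] at this
      linarith
end

section
/- Let K be a finite nonempty index set, β > 0, ρ > 0, and for each k ∈ K let w_k > 0 with ∑_{k∈K} w_k = 1 and δ_k > 0. Let b : ℝ → ℝ be twice continuously differentiable with b(0) = 0, b'(x) > 0 for x ∈ [0, W), b'(W) = 0, and b''(x) < 0 for x ∈ [0, W], and assume β·W·∑_{k∈K} w_k/δ_k > 1. Then: (i) for each θ ∈ (0, 1] and each k ∈ K there exists a unique a_k*(θ) ∈ (0, W) satisfying b(a)/b'(a) − a = (ρ + δ_k)/(β·θ), each map θ ↦ a_k*(θ) is strictly decreasing, and for fixed θ, a_k*(θ) is larger for larger δ_k; (ii) there exists a unique θ^CE ∈ (0, 1) satisfying ∑_{k∈K} w_k·(β·a_k*(θ^CE)/δ_k)/(θ^CE·β·a_k*(θ^CE)/δ_k + 1) = 1. In particular, β·∑_{k∈K} w_k·a_k*(θ^CE)/δ_k > 1, so the equilibrium strategy profile lies outside the extinction region and the infection never extinguishes. -/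
section Aux
variable {W : ℝ} {b : ℝ → ℝ}

lemma aux_bmono (hW : 0 < W) (hb : ContDiff ℝ 2 b)
    (hb' : ∀ x : ℝ, 0 ≤ x → x < W → 0 < deriv b x) :
    StrictMonoOn b (Set.Icc 0 W) := by
  apply strictMonoOn_of_deriv_pos (convex_Icc 0 W) hb.continuous.continuousOn
  intro x hx
  rw [interior_Icc] at hx
  exact hb' x hx.1.le hx.2

lemma aux_b'anti (hW : 0 < W) (hb : ContDiff ℝ 2 b)
    (hb'' : ∀ x : ℝ, 0 ≤ x → x ≤ W → deriv (deriv b) x < 0) :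
    StrictAntiOn (deriv b) (Set.Icc 0 W) := by
  apply strictAntiOn_of_deriv_neg (convex_Icc 0 W)
    ((hb.continuous_deriv one_le_two).continuousOn)
  intro x hx
  rw [interior_Icc] at hx
  exact hb'' x hx.1.le hx.2.le
end Aux

section Aux2
variable {W : ℝ} {b : ℝ → ℝ}

lemma aux_bpos (hW : 0 < W) (hb : ContDiff ℝ 2 b) (hb0 : b 0 = 0)
    (hb' : ∀ x : ℝ, 0 ≤ x → x < W → 0 < deriv b x) :
    ∀ a ∈ Set.Ioc 0 W, 0 < b a := by
  intro a ha
  have := aux_bmono hW hb hb' (Set.mem_Icc.2 ⟨le_refl 0, hW.le⟩)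
    (Set.mem_Icc.2 ⟨ha.1.le, ha.2⟩) ha.1
  rwa [hb0] at this

lemma aux_gmono (hW : 0 < W) (hb : ContDiff ℝ 2 b) (hb0 : b 0 = 0)
    (hb' : ∀ x : ℝ, 0 ≤ x → x < W → 0 < deriv b x)
    (hb'' : ∀ x : ℝ, 0 ≤ x → x ≤ W → deriv (deriv b) x < 0) :
    ∀ a₁ ∈ Set.Ioo 0 W, ∀ a₂ ∈ Set.Ioo 0 W, a₁ < a₂ →
      b a₁ / deriv b a₁ - a₁ < b a₂ / deriv b a₂ - a₂ := by
  intro a₁ h₁ a₂ h₂ hlt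
  have hmem₁ : a₁ ∈ Set.Icc 0 W := ⟨h₁.1.le, h₁.2.le⟩
  have hmem₂ : a₂ ∈ Set.Icc 0 W := ⟨h₂.1.le, h₂.2.le⟩
  have hp₁ : 0 < deriv b a₁ := hb' a₁ h₁.1.le h₁.2
  have hp₂ : 0 < deriv b a₂ := hb' a₂ h₂.1.le h₂.2
  have hpp : deriv b a₂ < deriv b a₁ := aux_b'anti hW hb hb'' hmem₁ hmem₂ hlt
  have hB₁ : 0 < b a₁ := aux_bpos hW hb hb0 hb' a₁ ⟨h₁.1, h₁.2.le⟩
  -- MVT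
  obtain ⟨ξ, hξ, hξeq⟩ := exists_deriv_eq_slope b hlt
    hb.continuous.continuousOn
    ((hb.differentiable two_ne_zero).differentiableOn)
  have hξW : deriv b a₂ < deriv b ξ :=
    aux_b'anti hW hb hb'' ⟨(h₁.1.trans hξ.1).le, (hξ.2.trans h₂.2).le⟩ hmem₂ hξ.2
  have hslope : b a₂ - b a₁ > deriv b a₂ * (a₂ - a₁) := by
    have h1 : (b a₂ - b a₁) / (a₂ - a₁) > deriv b a₂ := by rw [← hξeq]; exact hξW
    have h2 : 0 < a₂ - a₁ := by linarith
    calc b a₂ - b a₁ = (b a₂ - b a₁) / (a₂ - a₁) * (a₂ - a₁) := by field_simp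
    _ > deriv b a₂ * (a₂ - a₁) := by exact mul_lt_mul_of_pos_right h1 h2
  have key : b a₁ / deriv b a₁ + (a₂ - a₁) < b a₂ / deriv b a₂ := by
    rw [div_add' _ _ _ hp₁.ne', div_lt_div_iff₀ hp₁ hp₂]
    nlinarith [mul_lt_mul_of_pos_right hslope hp₁, mul_lt_mul_of_pos_left hpp hB₁]
  linarith
end Aux2

section Aux3
variable {W : ℝ} {b : ℝ → ℝ}

lemma aux_gcont (hW : 0 < W) (hb : ContDiff ℝ 2 b)
    (hb' : ∀ x : ℝ, 0 ≤ x → x < W → 0 < deriv b x)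
    {s : Set ℝ} (hs : s ⊆ Set.Ioo 0 W) :
    ContinuousOn (fun a => b a / deriv b a - a) s := by
  apply ContinuousOn.sub _ continuousOn_id
  apply ContinuousOn.div hb.continuous.continuousOn
    ((hb.continuous_deriv one_le_two).continuousOn)
  intro x hx
  exact (hb' x (hs hx).1.le (hs hx).2).ne'

lemma aux_exists (hW : 0 < W) (hb : ContDiff ℝ 2 b) (hb0 : b 0 = 0)
    (hb' : ∀ x : ℝ, 0 ≤ x → x < W → 0 < deriv b x) (hbW : deriv b W = 0)
    (hb'' : ∀ x : ℝ, 0 ≤ x → x ≤ W → deriv (deriv b) x < 0)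
    (c : ℝ) (hc : 0 < c) :
    ∃ a ∈ Set.Ioo 0 W, b a / deriv b a - a = c := by
  set g : ℝ → ℝ := fun a => b a / deriv b a - a with hg
  have hW2 : (0:ℝ) < W / 2 := by linarith
  have hW2W : W / 2 < W := by linarith
  have hm : 0 < b (W/2) := aux_bpos hW hb hb0 hb' _ ⟨hW2, hW2W.le⟩
  -- upper point: a_hi with g a_hi > c
  obtain ⟨a_hi, hhi_mem, hhi⟩ : ∃ a ∈ Set.Ico (W/2) W, c < g a := by
    have hcont : ContinuousAt (deriv b) W := (hb.continuous_deriv one_le_two).continuousAt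
    rw [Metric.continuousAt_iff] at hcont
    have hεpos : 0 < b (W/2) / (c + W) := div_pos hm (by linarith)
    obtain ⟨d, hd, hdp⟩ := hcont _ hεpos
    set a := W - min d W / 2 with ha
    have hmin : 0 < min d W := lt_min hd hW
    have haW : a < W := by rw [ha]; linarith [hmin]
    have haW2 : W / 2 ≤ a := by
      rw [ha]; linarith [min_le_right d W]
    have ha0 : 0 < a := by rw [ha]; linarith [min_le_right d W]
    have hda : dist a W < d := by
      rw [Real.dist_eq, ha]
      have : min d W ≤ d := min_le_left _ _
      rw [abs_sub_comm]
      rw [abs_of_nonneg (by linarith)]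
      linarith
    have hsmall := hdp hda
    rw [hbW, Real.dist_eq, sub_zero] at hsmall
    have hpa : 0 < deriv b a := hb' a ha0.le haW
    have hpa' : deriv b a < b (W/2) / (c + W) := (le_abs_self _).trans_lt hsmall
    refine ⟨a, ⟨haW2, haW⟩, ?_⟩
    have hba : b (W/2) ≤ b a :=
      (aux_bmono hW hb hb').monotoneOn ⟨hW2.le, hW2W.le⟩ ⟨by linarith, haW.le⟩ haW2
    have h1 : c + W < b (W/2) / deriv b a := by
      rw [lt_div_iff₀ hpa]
      calc (c+W) * deriv b a < (c+W) * (b (W/2)/(c+W)) :=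
        mul_lt_mul_of_pos_left hpa' (by linarith)
      _ = b (W/2) := by field_simp
    have h2 : b (W/2) / deriv b a ≤ b a / deriv b a := by gcongr
    simp only [hg]
    have : a ≤ W := haW.le
    nlinarith [h2]
  -- lower point
  obtain ⟨a_lo, hlo_mem, hlo⟩ : ∃ a ∈ Set.Ioo 0 (W/2), g a < c := by
    have hp : 0 < deriv b (W/2) := hb' _ hW2.le hW2W
    have hcont : ContinuousAt b 0 := hb.continuous.continuousAt
    rw [Metric.continuousAt_iff] at hcont
    obtain ⟨d, hd, hdp⟩ := hcont _ (mul_pos hc hp)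
    set a := min d W / 4 with ha
    have hmin : 0 < min d W := lt_min hd hW
    have ha0 : 0 < a := by positivity
    have haW2 : a < W / 2 := by
      rw [ha]; linarith [min_le_right d W]
    have hda : dist a 0 < d := by
      rw [Real.dist_eq, sub_zero, abs_of_pos ha0, ha]
      have : min d W ≤ d := min_le_left _ _
      linarith
    have hsmall := hdp hda
    rw [Real.dist_eq, hb0, sub_zero] at hsmall
    have hba : b a < c * deriv b (W/2) := (le_abs_self _).trans_lt hsmall
    have hpa : deriv b (W/2) ≤ deriv b a :=
      ((aux_b'anti hW hb hb'').antitoneOn) ⟨ha0.le, by linarith⟩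
        ⟨hW2.le, hW2W.le⟩ haW2.le
    have hpa0 : 0 < deriv b a := lt_of_lt_of_le hp hpa
    refine ⟨a, ⟨ha0, haW2⟩, ?_⟩
    have hbapos : 0 < b a := aux_bpos hW hb hb0 hb' a ⟨ha0, by linarith⟩
    have h1 : b a / deriv b a ≤ b a / deriv b (W/2) :=
      div_le_div_of_nonneg_left hbapos.le hp hpa
    have h2 : b a / deriv b (W/2) < c := by
      rw [div_lt_iff₀ hp]; linarith
    simp only [hg]; linarith
  -- IVT
  have hlohi : a_lo < a_hi := lt_of_lt_of_le hlo_mem.2 hhi_mem.1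
  have hsub : Set.Icc a_lo a_hi ⊆ Set.Ioo 0 W := fun x hx =>
    ⟨lt_of_lt_of_le hlo_mem.1 hx.1, lt_of_le_of_lt hx.2 hhi_mem.2⟩
  have hgc : ContinuousOn g (Set.Icc a_lo a_hi) := aux_gcont hW hb hb' hsub
  have := intermediate_value_Ioo hlohi.le hgc (Set.mem_Ioo.2 ⟨hlo, hhi⟩)
  obtain ⟨a, ha, hga⟩ := this
  exact ⟨a, hsub ⟨ha.1.le, ha.2.le⟩, hga⟩
end Aux3

section Aux4
variable {W : ℝ} {b : ℝ → ℝ}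

lemma aux_cont (hW : 0 < W) (hb : ContDiff ℝ 2 b) (hb0 : b 0 = 0)
    (hb' : ∀ x : ℝ, 0 ≤ x → x < W → 0 < deriv b x)
    (hb'' : ∀ x : ℝ, 0 ≤ x → x ≤ W → deriv (deriv b) x < 0)
    (c : ℝ) (θ₀ : ℝ) (hθ₀ : 0 < θ₀) (f : ℝ → ℝ)
    (hf : ∀ θ ∈ Set.Icc θ₀ 1, f θ ∈ Set.Ioo 0 W ∧
      b (f θ) / deriv b (f θ) - f θ = c / θ) :
    ContinuousOn f (Set.Icc θ₀ 1) := by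
  set g : ℝ → ℝ := fun a => b a / deriv b a - a with hgdef
  have gmono := aux_gmono hW hb hb0 hb' hb''
  intro θ₁ hθ₁
  rw [Metric.continuousWithinAt_iff]
  intro ε hε
  obtain ⟨ha₁, hga₁⟩ := hf θ₁ hθ₁
  set a₁ : ℝ := f θ₁ with ha₁def
  set ε' : ℝ := min ε (min (a₁ / 2) ((W - a₁) / 2)) with hε'
  have hε'pos : 0 < ε' := by
    apply lt_min hε; apply lt_min
    · linarith [ha₁.1]
    · linarith [ha₁.2]
  have hε'a : ε' ≤ a₁ / 2 := (min_le_right _ _).trans (min_le_left _ _)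
  have hε'W : ε' ≤ (W - a₁) / 2 := (min_le_right _ _).trans (min_le_right _ _)
  have hl : a₁ - ε' ∈ Set.Ioo 0 W := ⟨by linarith [ha₁.1], by linarith [ha₁.2]⟩
  have hu : a₁ + ε' ∈ Set.Ioo 0 W := ⟨by linarith [ha₁.1], by linarith [ha₁.2]⟩
  have hgl : g (a₁ - ε') < c / θ₁ := by
    rw [← hga₁]; exact gmono _ hl _ ha₁ (by linarith)
  have hgu : c / θ₁ < g (a₁ + ε') := by
    rw [← hga₁]; exact gmono _ ha₁ _ hu (by linarith)
  -- continuity of θ ↦ c / θ at θ₁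
  have hθ₁pos : 0 < θ₁ := lt_of_lt_of_le hθ₀ hθ₁.1
  have hcdiv : ContinuousAt (fun θ : ℝ => c / θ) θ₁ :=
    ContinuousAt.div continuousAt_const continuousAt_id hθ₁pos.ne'
  rw [Metric.continuousAt_iff] at hcdiv
  obtain ⟨d, hd, hdp⟩ := hcdiv (min (c / θ₁ - g (a₁ - ε')) (g (a₁ + ε') - c / θ₁))
    (lt_min (by linarith) (by linarith))
  refine ⟨d, hd, ?_⟩
  intro θ hθ hdist
  obtain ⟨haθ, hgaθ⟩ := hf θ hθ
  have hcb := hdp hdist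
  rw [Real.dist_eq, abs_sub_lt_iff] at hcb
  have h1 : g (a₁ - ε') < c / θ := by
    have := hcb.2
    have h2 : c / θ₁ - c / θ < c / θ₁ - g (a₁ - ε') := this.trans_le (min_le_left _ _)
    linarith
  have h2 : c / θ < g (a₁ + ε') := by
    have := hcb.1
    have h3 : c / θ - c / θ₁ < g (a₁ + ε') - c / θ₁ := this.trans_le (min_le_right _ _)
    linarith
  have hlow : a₁ - ε' < f θ := by
    by_contra hcon
    push_neg at hcon
    rcases eq_or_lt_of_le hcon with h|h
    · rw [← hgaθ, h] at h1; linarith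
    · have := gmono _ haθ _ hl h
      rw [hgaθ] at this; linarith
  have hhigh : f θ < a₁ + ε' := by
    by_contra hcon
    push_neg at hcon
    rcases eq_or_lt_of_le hcon with h|h
    · rw [← hgaθ, ← h] at h2; linarith
    · have := gmono _ hu _ haθ h
      rw [hgaθ] at this; linarith
  rw [Real.dist_eq, abs_sub_lt_iff]
  constructor
  · have : ε' ≤ ε := min_le_left _ _
    linarith
  · have : ε' ≤ ε := min_le_left _ _
    linarith
end Aux4

set_option maxHeartbeats 3200000 in
/-- **Conjectural equilibrium with heterogeneous agents.**
(i) For each `θ ∈ (0,1]` and each type `k` there is a unique best response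
`aₖ*(θ) ∈ (0, W)` solving `b(a)/b'(a) − a = (ρ + δₖ)/(β·θ)`; it is strictly
decreasing in `θ` and, for fixed `θ`, larger for types with larger curing rate.
(ii) There is a unique `θ^CE ∈ (0,1)` satisfying the stationarity condition
`∑ₖ wₖ·(β·aₖ*(θ^CE)/δₖ)/(θ^CE·β·aₖ*(θ^CE)/δₖ + 1) = 1`; in particular
`β·∑ₖ wₖ·aₖ*(θ^CE)/δₖ > 1`, so the equilibrium lies outside the extinction
region and the infection never extinguishes. -/
theorem heterogeneous_conjectural_equilibrium
    (K : Type*) [Fintype K] [Nonempty K] (β ρ W : ℝ)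
    (hβ : 0 < β) (hρ : 0 < ρ) (hW : 0 < W)
    (w δ : K → ℝ) (hw : ∀ k, 0 < w k) (hsum : ∑ k, w k = 1)
    (hδ : ∀ k, 0 < δ k)
    (b : ℝ → ℝ) (hb : ContDiff ℝ 2 b) (hb0 : b 0 = 0)
    (hb' : ∀ x : ℝ, 0 ≤ x → x < W → 0 < deriv b x) (hbW : deriv b W = 0)
    (hb'' : ∀ x : ℝ, 0 ≤ x → x ≤ W → deriv (deriv b) x < 0)
    (hcond : 1 < β * W * ∑ k, w k / δ k) :
    (∀ θ : ℝ, 0 < θ → θ ≤ 1 → ∀ k : K,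
      ∃! a : ℝ, a ∈ Set.Ioo 0 W ∧
        b a / deriv b a - a = (ρ + δ k) / (β * θ)) ∧
    (∀ θ₁ θ₂ : ℝ, 0 < θ₁ → θ₁ < θ₂ → θ₂ ≤ 1 → ∀ k : K, ∀ a₁ a₂ : ℝ,
      a₁ ∈ Set.Ioo 0 W → a₂ ∈ Set.Ioo 0 W →
      b a₁ / deriv b a₁ - a₁ = (ρ + δ k) / (β * θ₁) →
      b a₂ / deriv b a₂ - a₂ = (ρ + δ k) / (β * θ₂) →
      a₂ < a₁) ∧
    (∀ θ : ℝ, 0 < θ → θ ≤ 1 → ∀ k₁ k₂ : K, δ k₁ < δ k₂ → ∀ a₁ a₂ : ℝ,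
      a₁ ∈ Set.Ioo 0 W → a₂ ∈ Set.Ioo 0 W →
      b a₁ / deriv b a₁ - a₁ = (ρ + δ k₁) / (β * θ) →
      b a₂ / deriv b a₂ - a₂ = (ρ + δ k₂) / (β * θ) →
      a₁ < a₂) ∧
    (∀ astar : ℝ → K → ℝ,
      (∀ θ : ℝ, 0 < θ → θ ≤ 1 → ∀ k : K, astar θ k ∈ Set.Ioo 0 W ∧
        b (astar θ k) / deriv b (astar θ k) - astar θ k = (ρ + δ k) / (β * θ)) →
      (∃! θCE : ℝ, θCE ∈ Set.Ioo (0 : ℝ) 1 ∧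
        ∑ k, w k * ((β * astar θCE k / δ k) / (θCE * (β * astar θCE k / δ k) + 1))
          = 1) ∧
      (∀ θCE ∈ Set.Ioo (0 : ℝ) 1,
        ∑ k, w k * ((β * astar θCE k / δ k) / (θCE * (β * astar θCE k / δ k) + 1))
          = 1 →
        1 < β * ∑ k, w k * astar θCE k / δ k)) := by
  have gmono := aux_gmono hW hb hb0 hb' hb''
  -- Part 1
  have part1 : ∀ θ : ℝ, 0 < θ → θ ≤ 1 → ∀ k : K,
      ∃! a : ℝ, a ∈ Set.Ioo 0 W ∧
        b a / deriv b a - a = (ρ + δ k) / (β * θ) := by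
    intro θ hθ _ k
    have hc : 0 < (ρ + δ k) / (β * θ) :=
      div_pos (by linarith [hδ k]) (mul_pos hβ hθ)
    obtain ⟨a, ha, hga⟩ := aux_exists hW hb hb0 hb' hbW hb'' _ hc
    refine ⟨a, ⟨ha, hga⟩, ?_⟩
    rintro a' ⟨ha', hga'⟩
    by_contra hne
    rcases lt_or_gt_of_ne hne with h|h
    · have := gmono _ ha' _ ha h; rw [hga, hga'] at this; linarith
    · have := gmono _ ha _ ha' h; rw [hga, hga'] at this; linarith
  -- Part 2
  have part2 : ∀ θ₁ θ₂ : ℝ, 0 < θ₁ → θ₁ < θ₂ → θ₂ ≤ 1 → ∀ k : K, ∀ a₁ a₂ : ℝ,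
      a₁ ∈ Set.Ioo 0 W → a₂ ∈ Set.Ioo 0 W →
      b a₁ / deriv b a₁ - a₁ = (ρ + δ k) / (β * θ₁) →
      b a₂ / deriv b a₂ - a₂ = (ρ + δ k) / (β * θ₂) →
      a₂ < a₁ := by
    intro θ₁ θ₂ hθ₁ hlt _ k a₁ a₂ ha₁ ha₂ hg₁ hg₂
    have hθ₂ : 0 < θ₂ := lt_trans hθ₁ hlt
    have hcc : (ρ + δ k) / (β * θ₂) < (ρ + δ k) / (β * θ₁) := by
      apply div_lt_div_of_pos_left (by linarith [hδ k]) (mul_pos hβ hθ₁)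
      exact mul_lt_mul_of_pos_left hlt hβ
    by_contra hcon
    push_neg at hcon
    rcases eq_or_lt_of_le hcon with h|h
    · rw [← h] at hg₂; rw [hg₁] at hg₂; linarith
    · have := gmono _ ha₁ _ ha₂ h; rw [hg₁, hg₂] at this; linarith
  -- Part 3
  have part3 : ∀ θ : ℝ, 0 < θ → θ ≤ 1 → ∀ k₁ k₂ : K, δ k₁ < δ k₂ → ∀ a₁ a₂ : ℝ,
      a₁ ∈ Set.Ioo 0 W → a₂ ∈ Set.Ioo 0 W →
      b a₁ / deriv b a₁ - a₁ = (ρ + δ k₁) / (β * θ) →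
      b a₂ / deriv b a₂ - a₂ = (ρ + δ k₂) / (β * θ) →
      a₁ < a₂ := by
    intro θ hθ _ k₁ k₂ hk a₁ a₂ ha₁ ha₂ hg₁ hg₂
    have hcc : (ρ + δ k₁) / (β * θ) < (ρ + δ k₂) / (β * θ) := by
      apply div_lt_div_of_pos_right (by linarith) (mul_pos hβ hθ)
    by_contra hcon
    push_neg at hcon
    rcases eq_or_lt_of_le hcon with h|h
    · rw [h, hg₁] at hg₂; linarith
    · have := gmono _ ha₂ _ ha₁ h; rw [hg₁, hg₂] at this; linarith
  refine ⟨part1, part2, part3, ?_⟩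
  intro astar hastar
  set S : ℝ → ℝ := fun θ =>
    ∑ k, w k * ((β * astar θ k / δ k) / (θ * (β * astar θ k / δ k) + 1)) with hS
  -- positivity of astar values
  have hapos : ∀ θ : ℝ, 0 < θ → θ ≤ 1 → ∀ k : K, 0 < astar θ k ∧ astar θ k < W :=
    fun θ h1 h2 k => ⟨(hastar θ h1 h2 k).1.1, (hastar θ h1 h2 k).1.2⟩
  -- strict antitonicity of S on (0,1]
  have Santi : ∀ θ₁ θ₂ : ℝ, 0 < θ₁ → θ₁ < θ₂ → θ₂ ≤ 1 → S θ₂ < S θ₁ := by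
    intro θ₁ θ₂ hθ₁ hlt hθ₂1
    have hθ₂ : 0 < θ₂ := lt_trans hθ₁ hlt
    have hθ₁1 : θ₁ ≤ 1 := le_of_lt (lt_of_lt_of_le hlt hθ₂1)
    apply Finset.sum_lt_sum_of_nonempty Finset.univ_nonempty
    intro k _
    have h1 := hastar θ₁ hθ₁ hθ₁1 k
    have h2 := hastar θ₂ hθ₂ hθ₂1 k
    have haa : astar θ₂ k < astar θ₁ k :=
      part2 θ₁ θ₂ hθ₁ hlt hθ₂1 k _ _ h1.1 h2.1 h1.2 h2.2
    have hx₁ : 0 < β * astar θ₁ k / δ k :=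
      div_pos (mul_pos hβ h1.1.1) (hδ k)
    have hx₂ : 0 < β * astar θ₂ k / δ k :=
      div_pos (mul_pos hβ h2.1.1) (hδ k)
    have hxx : β * astar θ₂ k / δ k < β * astar θ₁ k / δ k := by
      apply div_lt_div_of_pos_right _ (hδ k)
      exact mul_lt_mul_of_pos_left haa hβ
    apply mul_lt_mul_of_pos_left _ (hw k)
    rw [div_lt_div_iff₀ (by positivity) (by positivity)]
    nlinarith [mul_lt_mul_of_pos_right hlt (mul_pos hx₁ hx₂)]
  -- S 1 < 1
  have hS1 : S 1 < 1 := by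
    have hlt : S 1 < ∑ k, w k := by
      apply Finset.sum_lt_sum_of_nonempty Finset.univ_nonempty
      intro k _
      have h1 := hastar 1 one_pos le_rfl k
      have hx : 0 < β * astar 1 k / δ k := div_pos (mul_pos hβ h1.1.1) (hδ k)
      nth_rewrite 2 [show w k = w k * 1 by ring]
      apply mul_lt_mul_of_pos_left _ (hw k)
      rw [div_lt_one (by linarith)]
      linarith
    rw [hsum] at hlt
    exact hlt
  clear_value S
  -- constants
  set T : ℝ := ∑ k, w k / δ k with hT
  have hTpos : 0 < T :=
    Finset.sum_pos (fun k _ => div_pos (hw k) (hδ k)) Finset.univ_nonempty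
  set D : ℝ := β * W * T - 1 with hD
  have hDpos : 0 < D := by simp only [hD]; linarith
  set η : ℝ := min (W / 2) (D / (2 * (β * T))) with hη
  have hηpos : 0 < η := lt_min (by linarith) (by positivity)
  have hηW2 : η ≤ W / 2 := min_le_left _ _
  have hηD : β * T * η ≤ D / 2 := by
    calc β * T * η ≤ β * T * (D / (2 * (β * T))) :=
      mul_le_mul_of_nonneg_left (min_le_right _ _) (by positivity)
    _ = D / 2 := by field_simp
  clear_value η
  set Q : ℝ := ∑ k, w k * (β * W / δ k) ^ 2 with hQ
  have hQnn : 0 ≤ Q :=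
    Finset.sum_nonneg (fun k _ => mul_nonneg (hw k).le (sq_nonneg _))
  clear_value T D Q
  have haη : W - η ∈ Set.Ioo 0 W := ⟨by linarith, by linarith⟩
  set gval : ℝ := b (W - η) / deriv b (W - η) - (W - η) with hgval
  set θ₀ : ℝ := min (min (1/2) (D / (4 * (Q + 1)))) (ρ / (β * (|gval| + 1))) with hθ₀
  have hθ₀pos : 0 < θ₀ :=
    lt_min (lt_min (by norm_num) (by positivity)) (by positivity)
  have hθ₀half : θ₀ ≤ 1/2 := (min_le_left _ _).trans (min_le_left _ _)
  have hθ₀ρ : θ₀ ≤ ρ / (β * (|gval| + 1)) := min_le_right _ _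
  have hθ₀Q : θ₀ ≤ D / (4 * (Q + 1)) := (min_le_left _ _).trans (min_le_right _ _)
  clear_value θ₀
  clear_value gval
  have hθ₀1 : θ₀ ≤ 1 := by linarith
  -- at θ₀ all best responses exceed W - η
  have hbig : ∀ k : K, W - η < astar θ₀ k := by
    intro k
    have h1 := hastar θ₀ hθ₀pos hθ₀1 k
    by_contra hcon
    push_neg at hcon
    have hgle : b (astar θ₀ k) / deriv b (astar θ₀ k) - astar θ₀ k ≤ gval := by
      rw [hgval]
      rcases eq_or_lt_of_le hcon with h|h
      · rw [h]
      · exact (gmono _ h1.1 _ haη h).le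
    rw [h1.2] at hgle
    have hββ : β * θ₀ ≤ ρ / (|gval| + 1) := by
      calc β * θ₀ ≤ β * (ρ / (β * (|gval| + 1))) :=
        mul_le_mul_of_nonneg_left hθ₀ρ hβ.le
      _ = ρ / (|gval| + 1) := by
        rw [mul_div_assoc']; rw [mul_div_mul_left _ _ hβ.ne']
    have h3 : |gval| + 1 ≤ ρ / (β * θ₀) := by
      rw [le_div_iff₀ (mul_pos hβ hθ₀pos)]
      calc (|gval| + 1) * (β * θ₀) ≤ (|gval| + 1) * (ρ / (|gval| + 1)) :=
        mul_le_mul_of_nonneg_left hββ (by positivity)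
      _ = ρ := by field_simp
    have h4 : ρ / (β * θ₀) ≤ (ρ + δ k) / (β * θ₀) :=
      (div_le_div_iff_of_pos_right (mul_pos hβ hθ₀pos)).2 (by linarith [hδ k])
    have h5 := le_abs_self gval
    linarith
  -- S θ₀ > 1
  have hSθ₀ : 1 < S θ₀ := by
    have hterm : ∀ k : K, w k * (β * (W - η) / δ k) - θ₀ * (w k * (β * W / δ k) ^ 2)
        ≤ w k * ((β * astar θ₀ k / δ k) / (θ₀ * (β * astar θ₀ k / δ k) + 1)) := by
      intro k
      have h1 := hastar θ₀ hθ₀pos hθ₀1 k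
      set x : ℝ := β * astar θ₀ k / δ k with hx
      have hxpos : 0 < x := div_pos (mul_pos hβ h1.1.1) (hδ k)
      have hx1 : β * (W - η) / δ k ≤ x := by
        rw [hx]; gcongr
        · exact (hδ k).le
        · exact (hbig k).le
      have hx2 : x ≤ β * W / δ k := by
        rw [hx]; gcongr
        · exact (hδ k).le
        · exact h1.1.2.le
      clear_value x
      have key : x - θ₀ * x ^ 2 ≤ x / (θ₀ * x + 1) := by
        rw [le_div_iff₀ (by positivity)]
        nlinarith [mul_nonneg (mul_nonneg hθ₀pos.le hθ₀pos.le)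
          (by positivity : (0:ℝ) ≤ x ^ 3)]
      have key2 : w k * (x - θ₀ * x ^ 2) ≤ w k * (x / (θ₀ * x + 1)) :=
        mul_le_mul_of_nonneg_left key (hw k).le
      have key3 : w k * (β * (W - η) / δ k) - θ₀ * (w k * (β * W / δ k) ^ 2)
          ≤ w k * (x - θ₀ * x ^ 2) := by
        have hsq : x ^ 2 ≤ (β * W / δ k) ^ 2 := by
          have h9 : (0:ℝ) ≤ β * W / δ k := (div_pos (mul_pos hβ hW) (hδ k)).le
          nlinarith
        nlinarith [hw k, mul_le_mul_of_nonneg_left hsq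
          (mul_nonneg hθ₀pos.le (hw k).le), mul_le_mul_of_nonneg_left hx1 (hw k).le]
      linarith
    have hsum1 : ∑ k, (w k * (β * (W - η) / δ k) - θ₀ * (w k * (β * W / δ k) ^ 2))
        ≤ ∑ k, w k * ((β * astar θ₀ k / δ k) / (θ₀ * (β * astar θ₀ k / δ k) + 1)) :=
      Finset.sum_le_sum (fun k _ => hterm k)
    rw [Finset.sum_sub_distrib] at hsum1
    have e1 : ∑ k, w k * (β * (W - η) / δ k) = β * (W - η) * T := by
      rw [hT, Finset.mul_sum]
      apply Finset.sum_congr rfl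
      intros; ring
    have e2 : ∑ k, θ₀ * (w k * (β * W / δ k) ^ 2) = θ₀ * Q := by
      rw [hQ, Finset.mul_sum]
    rw [e1, e2] at hsum1
    have hθQ : θ₀ * Q ≤ D / 4 := by
      have h3 : θ₀ * (Q + 1) ≤ D / 4 := by
        rw [← le_div_iff₀ (by positivity)]
        calc θ₀ ≤ D / (4 * (Q + 1)) := hθ₀Q
        _ = D / 4 / (Q + 1) := by rw [div_div]
      nlinarith
    have hlow : 1 + D / 2 ≤ β * (W - η) * T := by
      have : β * (W - η) * T = β * W * T - β * T * η := by ring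
      rw [this]
      have hDT : β * W * T = 1 + D := by rw [hD]; ring
      linarith
    simp only [hS]
    linarith
  -- continuity of S on [θ₀, 1]
  have hθ₀lt1 : θ₀ < 1 := by linarith
  have hScont : ContinuousOn S (Set.Icc θ₀ 1) := by
    rw [hS]
    apply continuousOn_finset_sum
    intro k _
    have hfk : ContinuousOn (fun θ => astar θ k) (Set.Icc θ₀ 1) := by
      apply aux_cont hW hb hb0 hb' hb'' ((ρ + δ k) / β) θ₀ hθ₀pos
      intro θ hθ
      have hθpos : 0 < θ := lt_of_lt_of_le hθ₀pos hθ.1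
      refine ⟨(hastar θ hθpos hθ.2 k).1, ?_⟩
      rw [(hastar θ hθpos hθ.2 k).2, div_div]
    have hnum : ContinuousOn (fun θ => β * astar θ k / δ k) (Set.Icc θ₀ 1) :=
      (continuousOn_const.mul hfk).div_const _
    apply ContinuousOn.mul continuousOn_const
    apply ContinuousOn.div hnum
    · exact (continuousOn_id.mul hnum).add continuousOn_const
    · intro θ hθ
      have hθpos : 0 < θ := lt_of_lt_of_le hθ₀pos hθ.1
      have hx : 0 < β * astar θ k / δ k :=
        div_pos (mul_pos hβ (hapos θ hθpos hθ.2 k).1) (hδ k)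
      have : 0 < θ * (β * astar θ k / δ k) + 1 := by positivity
      exact this.ne'
  -- IVT: existence of θCE
  obtain ⟨θCE, hθCEmem, hSθCE⟩ :=
    intermediate_value_Ioo' hθ₀lt1.le hScont (Set.mem_Ioo.2 ⟨hS1, hSθ₀⟩)
  have hθCE01 : θCE ∈ Set.Ioo (0:ℝ) 1 :=
    ⟨lt_trans hθ₀pos hθCEmem.1, hθCEmem.2⟩
  have huniq : ∀ y ∈ Set.Ioo (0:ℝ) 1, S y = 1 → y = θCE := by
    intro y hy hSy
    by_contra hne
    rcases lt_or_gt_of_ne hne with h|h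
    · have := Santi y θCE hy.1 h hθCE01.2.le
      rw [hSy, hSθCE] at this; exact lt_irrefl 1 this
    · have := Santi θCE y hθCE01.1 h hy.2.le
      rw [hSy, hSθCE] at this; exact lt_irrefl 1 this
  have hSdef : ∀ y : ℝ, S y
      = ∑ k, w k * ((β * astar y k / δ k) / (y * (β * astar y k / δ k) + 1)) :=
    fun y => by simp only [hS]
  constructor
  · refine ⟨θCE, ⟨hθCE01, by rw [← hSdef θCE]; exact hSθCE⟩, ?_⟩
    intro y hy
    exact huniq y hy.1 (by rw [hSdef y]; exact hy.2)
  · intro θ hθ hSθ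
    have hstep : (1:ℝ) < ∑ k, w k * (β * astar θ k / δ k) := by
      rw [← hSθ]
      apply Finset.sum_lt_sum_of_nonempty Finset.univ_nonempty
      intro k _
      have hx : 0 < β * astar θ k / δ k :=
        div_pos (mul_pos hβ (hapos θ hθ.1 hθ.2.le k).1) (hδ k)
      apply mul_lt_mul_of_pos_left _ (hw k)
      have hd1 : (1:ℝ) < θ * (β * astar θ k / δ k) + 1 := by
        nlinarith [mul_pos hθ.1 hx]
      calc (β * astar θ k / δ k) / (θ * (β * astar θ k / δ k) + 1)
          < (β * astar θ k / δ k) / 1 := by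
            apply div_lt_div_of_pos_left hx zero_lt_one hd1
      _ = β * astar θ k / δ k := by rw [div_one]
    have heq : ∑ k, w k * (β * astar θ k / δ k)
        = β * ∑ k, w k * astar θ k / δ k := by
      rw [Finset.mul_sum]
      apply Finset.sum_congr rfl
      intros; ring
    rw [heq] at hstep
    exact hstep
end
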